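/- arXiv:1204.1687 — 2 statements merged into one kernel-verified Lean document; each statement's English description precedes it below -/
import Mathlib

section
/- Let d ≥ 1 and let β = (β_{ij})_{i+j ≤ 2d} be a real multisequence such that M_d(β) is positive semidefinite and its column relations are generated entirely by X^n = p(X,Y) and Y^m = q(X,Y) via recursiveness and linearity. Then M_d(β) admits a unique RG extension: there is exactly one extension β' = (β'_{ij})_{i+j ≤ 2d+2} of β for which M_{d+1}(β') is an RG extension of M_d(β); moreover, in the columns of this M_{d+1} the relations X^{n+i}Y^{d+1−n−i} = (x^i y^{d+1−n−i} p)(X,Y) for 0 ≤ i ≤ d+1−n and X^{d+1−m−g}Y^{m+g} = (x^{d+1−m−g} y^g q)(X,Y) for 0 ≤ g ≤ d+1−m all hold. -/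
open Finset Matrix

noncomputable section

/-- Monomial indices of degree at most `d` (the monomial `x^i y^j` is the pair `(i,j)`). -/
abbrev Idx (d : ℕ) : Type := {ij : ℕ × ℕ // ij.1 + ij.2 ≤ d}

/-- Monomial indices of degree exactly `e`. -/
abbrev Jdx (e : ℕ) : Type := {ij : ℕ × ℕ // ij.1 + ij.2 = e}

instance (d : ℕ) : Fintype (Idx d) :=
  Fintype.subtype
    ((Finset.range (d + 1) ×ˢ Finset.range (d + 1)).filter fun ij => ij.1 + ij.2 ≤ d)
    (by
      rintro ⟨a, b⟩
      simp only [Finset.mem_filter, Finset.mem_product, Finset.mem_range]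
      omega)

instance (e : ℕ) : Fintype (Jdx e) :=
  Fintype.subtype
    ((Finset.range (e + 1) ×ˢ Finset.range (e + 1)).filter fun ij => ij.1 + ij.2 = e)
    (by
      rintro ⟨a, b⟩
      simp only [Finset.mem_filter, Finset.mem_product, Finset.mem_range]
      omega)

/-- The moment matrix `M_d(β)`: rows and columns are indexed by monomials of degree ≤ d,
with entry in row `(i,j)`, column `(k,l)` equal to `β (i+k) (j+l)`. -/
def momentMatrix (d : ℕ) (β : ℕ → ℕ → ℝ) : Matrix (Idx d) (Idx d) ℝ :=
  Matrix.of fun r c => β (r.1.1 + c.1.1) (r.1.2 + c.1.2)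

/-- The coefficient vector (truncated to degree ≤ d) of the polynomial with
coefficient function `a`. -/
def coeffVec (d : ℕ) (a : ℕ → ℕ → ℝ) : Idx d → ℝ := fun c => a c.1.1 c.1.2

/-- `p(X,Y)`: the linear combination of the columns of `M_d(β)` given by the
coefficient function `a` of `p`. -/
def polyCol (d : ℕ) (β : ℕ → ℕ → ℝ) (a : ℕ → ℕ → ℝ) : Idx d → ℝ :=
  momentMatrix d β *ᵥ coeffVec d a

/-- Coefficient function of the monomial `x^u y^v`. -/
def monoC (u v : ℕ) : ℕ → ℕ → ℝ := fun k l => if k = u ∧ l = v then 1 else 0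

/-- Coefficient function of `x^u y^v * p`, where `p` has coefficient function `a`. -/
def shiftC (u v : ℕ) (a : ℕ → ℕ → ℝ) : ℕ → ℕ → ℝ :=
  fun k l => if u ≤ k ∧ v ≤ l then a (k - u) (l - v) else 0

/-- The polynomial with coefficient function `a` has (total) degree at most `D`. -/
def DegLE (a : ℕ → ℕ → ℝ) (D : ℕ) : Prop := ∀ k l : ℕ, D < k + l → a k l = 0

/-- Coefficient function of the product of two polynomials. -/
def cMul (a b : ℕ → ℕ → ℝ) : ℕ → ℕ → ℝ := fun k l =>
  ∑ i ∈ Finset.range (k + 1), ∑ j ∈ Finset.range (l + 1), a i j * b (k - i) (l - j)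

/-- `M_d(β)` is recursively generated: whenever `p, q, pq` all have degree ≤ d and
`p(X,Y) = 0`, also `(pq)(X,Y) = 0`. -/
def RecursivelyGenerated (d : ℕ) (β : ℕ → ℕ → ℝ) : Prop :=
  ∀ a b : ℕ → ℕ → ℝ, DegLE a d → DegLE b d → DegLE (cMul a b) d →
    polyCol d β a = 0 → polyCol d β (cMul a b) = 0

/-- The column relations of `M_d(β)` are generated entirely by `X^n = p(X,Y)` and
`Y^m = q(X,Y)` via recursiveness and linearity. -/
def GeneratedBy (d n m : ℕ) (β p q : ℕ → ℕ → ℝ) : Prop :=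
  1 ≤ n ∧ n ≤ d ∧ 1 ≤ m ∧ m ≤ d ∧
  DegLE p (n - 1) ∧ DegLE q m ∧ q 0 m = 0 ∧
  polyCol d β (monoC n 0 - p) = 0 ∧
  polyCol d β (monoC 0 m - q) = 0 ∧
  ∀ v : Idx d → ℝ,
    momentMatrix d β *ᵥ v = 0 ↔
      v ∈ Submodule.span ℝ
        {w : Idx d → ℝ |
          (∃ i j : ℕ, n + i + j ≤ d ∧ w = coeffVec d (shiftC i j (monoC n 0 - p))) ∨
          (∃ k l : ℕ, m + k + l ≤ d ∧ w = coeffVec d (shiftC k l (monoC 0 m - q)))}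

/-- `β'` (a multisequence of degree `2d+2` extending `β`) gives an RG extension
`M_{d+1}(β')` of `M_d(β)`: the column space of `B(d+1)` is contained in that of `M_d`,
every column relation of `M_d` extends to `M_{d+1}`, and `M_{d+1}` is recursively
generated. -/
def RGExtension (d : ℕ) (β β' : ℕ → ℕ → ℝ) : Prop :=
  (∀ i j : ℕ, i + j ≤ 2 * d → β' i j = β i j) ∧
  (∀ c : Jdx (d + 1), ∃ v : Idx d → ℝ,
      (fun r : Idx d => β' (r.1.1 + c.1.1) (r.1.2 + c.1.2)) = momentMatrix d β *ᵥ v) ∧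
  (∀ a : ℕ → ℕ → ℝ, DegLE a d → polyCol d β a = 0 → polyCol (d + 1) β' a = 0) ∧
  RecursivelyGenerated (d + 1) β'

/-! ### Triangle finset -/

def TT (D : ℕ) : Finset (ℕ × ℕ) :=
  (Finset.range (D + 1) ×ˢ Finset.range (D + 1)).filter fun ij => ij.1 + ij.2 ≤ D

lemma mem_TT {D : ℕ} {ij : ℕ × ℕ} : ij ∈ TT D ↔ ij.1 + ij.2 ≤ D := by
  simp only [TT, Finset.mem_filter, Finset.mem_product, Finset.mem_range]
  omega

lemma TT_subset {D D' : ℕ} (h : D ≤ D') : TT D ⊆ TT D' := by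
  intro x hx; rw [mem_TT] at *; omega

lemma sum_TT_double {D : ℕ} (F : ℕ → ℕ → ℝ) :
    ∑ ij ∈ TT D, F ij.1 ij.2 = ∑ a ∈ Finset.range (D + 1), ∑ b ∈ Finset.range (D + 1 - a), F a b := by
  rw [TT, Finset.sum_filter, Finset.sum_product]
  refine Finset.sum_congr rfl fun a ha => ?_
  rw [Finset.mem_range] at ha
  have : Finset.range (D + 1 - a) = (Finset.range (D + 1)).filter (fun b => a + b ≤ D) := by
    ext b; simp only [Finset.mem_range, Finset.mem_filter]; omega
  rw [this, Finset.sum_filter]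

lemma sum_idx_eq_TT {D : ℕ} (F : ℕ → ℕ → ℝ) :
    ∑ c : Idx D, F c.1.1 c.1.2 = ∑ ij ∈ TT D, F ij.1 ij.2 := by
  rw [Finset.sum_subtype (TT D) (fun x => mem_TT) (fun ij => F ij.1 ij.2)]

/-! ### DegLE lemmas -/

lemma DegLE.mono {a : ℕ → ℕ → ℝ} {D D' : ℕ} (h : DegLE a D) (hD : D ≤ D') : DegLE a D' :=
  fun k l hk => h k l (by omega)

lemma DegLE_monoC (U V : ℕ) : DegLE (monoC U V) (U + V) := by
  intro k l h
  simp only [monoC, ite_eq_right_iff]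
  rintro ⟨rfl, rfl⟩; omega

lemma DegLE_shiftC {a : ℕ → ℕ → ℝ} {D : ℕ} (h : DegLE a D) (A B : ℕ) :
    DegLE (shiftC A B a) (A + B + D) := by
  intro k l hk
  simp only [shiftC]
  split_ifs with hc
  · exact h _ _ (by omega)
  · rfl

lemma DegLE_sub {a b : ℕ → ℕ → ℝ} {D : ℕ} (ha : DegLE a D) (hb : DegLE b D) :
    DegLE (a - b) D := by
  intro k l h
  simp only [Pi.sub_apply, ha k l h, hb k l h, sub_zero]

/-! ### shiftC lemmas -/

lemma shiftC_zero (h : ℕ → ℕ → ℝ) : shiftC 0 0 h = h := by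
  funext k l; simp [shiftC]

lemma shiftC_shiftC (A B C E : ℕ) (h : ℕ → ℕ → ℝ) :
    shiftC A B (shiftC C E h) = shiftC (A + C) (B + E) h := by
  funext k l
  simp only [shiftC]
  split_ifs with h1 h2 h3 h4
  · congr 1 <;> omega
  · exact absurd ⟨by omega, by omega⟩ h3
  · exact absurd ⟨by omega, by omega⟩ h2
  · rfl
  · exact absurd ⟨by omega, by omega⟩ h1
  · rfl

lemma shiftC_monoC (A B U V : ℕ) : shiftC A B (monoC U V) = monoC (A + U) (B + V) := by
  funext k l
  simp only [shiftC, monoC]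
  split_ifs with h1 h2 h3 h4 <;> first | rfl | omega

lemma shiftC_sub (A B : ℕ) (g h : ℕ → ℕ → ℝ) :
    shiftC A B (g - h) = shiftC A B g - shiftC A B h := by
  funext k l
  simp only [shiftC, Pi.sub_apply]
  split_ifs with h1 <;> simp

lemma shiftC_sum {ι : Type*} (A B : ℕ) (S : Finset ι) (c : ι → ℝ) (F : ι → ℕ → ℕ → ℝ) :
    shiftC A B (fun k l => ∑ i ∈ S, c i * F i k l) =
      fun k l => ∑ i ∈ S, c i * shiftC A B (F i) k l := by
  funext k l
  simp only [shiftC]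
  split_ifs with h1
  · rfl
  · exact (Finset.sum_eq_zero fun i _ => by simp).symm

lemma shiftC_add (A B : ℕ) (g h : ℕ → ℕ → ℝ) :
    shiftC A B (g + h) = shiftC A B g + shiftC A B h := by
  funext k l
  simp only [shiftC, Pi.add_apply]
  split_ifs with h1 <;> simp

lemma shiftC_smul (A B : ℕ) (c : ℝ) (h : ℕ → ℕ → ℝ) :
    shiftC A B (c • h) = c • shiftC A B h := by
  funext k l
  simp only [shiftC, Pi.smul_apply, smul_eq_mul]
  split_ifs with h1 <;> simp

/-! ### lamF -/

def lamF (f : ℕ → ℕ → ℝ) (N : ℕ) (h : ℕ → ℕ → ℝ) : ℝ :=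
  ∑ ij ∈ TT N, h ij.1 ij.2 * f ij.1 ij.2

lemma lamF_congr {f h : ℕ → ℕ → ℝ} {N N' : ℕ} (hh : DegLE h N) (hN : N ≤ N') :
    lamF f N' h = lamF f N h := by
  refine (Finset.sum_subset (TT_subset hN) fun x hx hnx => ?_).symm
  rw [mem_TT] at hnx
  rw [hh x.1 x.2 (by omega), zero_mul]

lemma lamF_sub (f : ℕ → ℕ → ℝ) (N : ℕ) (g h : ℕ → ℕ → ℝ) :
    lamF f N (g - h) = lamF f N g - lamF f N h := by
  simp only [lamF, Pi.sub_apply, sub_mul, Finset.sum_sub_distrib]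

lemma lamF_add (f : ℕ → ℕ → ℝ) (N : ℕ) (g h : ℕ → ℕ → ℝ) :
    lamF f N (g + h) = lamF f N g + lamF f N h := by
  simp only [lamF, Pi.add_apply, add_mul, Finset.sum_add_distrib]

lemma lamF_smul (f : ℕ → ℕ → ℝ) (N : ℕ) (c : ℝ) (h : ℕ → ℕ → ℝ) :
    lamF f N (c • h) = c * lamF f N h := by
  simp only [lamF, Pi.smul_apply, smul_eq_mul, Finset.mul_sum, mul_assoc]

lemma lamF_sum {ι : Type*} (f : ℕ → ℕ → ℝ) (N : ℕ) (S : Finset ι) (c : ι → ℝ)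
    (F : ι → ℕ → ℕ → ℝ) :
    lamF f N (fun k l => ∑ i ∈ S, c i * F i k l) = ∑ i ∈ S, c i * lamF f N (F i) := by
  simp only [lamF, Finset.sum_mul]
  rw [Finset.sum_comm]
  refine Finset.sum_congr rfl fun i _ => ?_
  rw [Finset.mul_sum]
  refine Finset.sum_congr rfl fun x _ => by ring

lemma lamF_monoC {f : ℕ → ℕ → ℝ} {N U V : ℕ} (h : U + V ≤ N) :
    lamF f N (monoC U V) = f U V := by
  rw [lamF, Finset.sum_eq_single (U, V)]
  · simp [monoC]
  · intro b _ hb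
    have : ¬(b.1 = U ∧ b.2 = V) := by
      rintro ⟨h1, h2⟩; exact hb (Prod.ext h1 h2)
    simp [monoC, this]
  · intro hb
    exact absurd (mem_TT.mpr h) hb

lemma lamF_shift {f h : ℕ → ℕ → ℝ} {D A B N : ℕ} (hh : DegLE h D) (hN : A + B + D ≤ N) :
    lamF f N (shiftC A B h) = ∑ ab ∈ TT D, h ab.1 ab.2 * f (A + ab.1) (B + ab.2) := by
  classical
  have hinj : Set.InjOn (fun ab : ℕ × ℕ => (A + ab.1, B + ab.2)) (TT D) := by
    intro x _ y _ hxy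
    simp only [Prod.mk.injEq] at hxy
    exact Prod.ext (by omega) (by omega)
  have hsub : (TT D).image (fun ab => (A + ab.1, B + ab.2)) ⊆ TT N := by
    intro x hx
    simp only [Finset.mem_image] at hx
    obtain ⟨ab, hab, rfl⟩ := hx
    rw [mem_TT] at *
    omega
  rw [lamF]
  rw [← Finset.sum_subset hsub]
  · rw [Finset.sum_image hinj]
    refine Finset.sum_congr rfl fun ab _ => ?_
    congr 1
    simp only [shiftC]
    rw [if_pos ⟨Nat.le_add_right A ab.1, Nat.le_add_right B ab.2⟩]
    congr 1 <;> omega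
  · intro x hx hnx
    have hz : shiftC A B h x.1 x.2 = 0 := by
      by_cases hc : A ≤ x.1 ∧ B ≤ x.2
      · have hx' : D < (x.1 - A) + (x.2 - B) := by
          by_contra hcc
          push_neg at hcc
          exact hnx (Finset.mem_image.mpr ⟨(x.1 - A, x.2 - B), mem_TT.mpr hcc,
            Prod.ext (by omega) (by omega)⟩)
        simp only [shiftC, if_pos hc]
        exact hh _ _ hx'
      · simp only [shiftC, if_neg hc]
    rw [hz, zero_mul]

/-! ### The extension functional on monomials -/

def nu (n m : ℕ) (p q β : ℕ → ℕ → ℝ) (u v : ℕ) : ℝ :=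
  if h1 : n ≤ u then
    ∑ a ∈ (Finset.range n).attach, ∑ b ∈ (Finset.range (n - a.1)).attach,
      p a.1 b.1 * nu n m p q β (u - n + a.1) (v + b.1)
  else if h2 : m ≤ v then
    ∑ a ∈ (Finset.range (m + 1)).attach, ∑ b ∈ (Finset.range (min (m + 1 - a.1) m)).attach,
      q a.1 b.1 * nu n m p q β (u + a.1) (v - m + b.1)
  else β u v
termination_by (u + v, v)
decreasing_by
  · have ha := a.2
    have hb := b.2
    simp only [Finset.mem_range] at ha hb
    have : u - n + a.1 + (v + b.1) < u + v := by omega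
    exact Prod.Lex.left _ _ this
  · have ha := a.2
    have hb := b.2
    simp only [Finset.mem_range] at ha hb
    rw [Prod.lex_iff]
    omega

section NuLemmas

variable {n m : ℕ} {β p q : ℕ → ℕ → ℝ} {u v : ℕ}

lemma nu_p (hn : 1 ≤ n) (hu : n ≤ u) :
    nu n m p q β u v = ∑ ab ∈ TT (n - 1), p ab.1 ab.2 * nu n m p q β (u - n + ab.1) (v + ab.2) := by
  rw [nu, dif_pos hu]
  rw [Finset.sum_attach _ (fun a => ∑ b ∈ (Finset.range (n - a)).attach,
      p a b.1 * nu n m p q β (u - n + a) (v + b.1))]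
  rw [sum_TT_double (fun a b => p a b * nu n m p q β (u - n + a) (v + b))]
  have h1 : n - 1 + 1 = n := by omega
  rw [h1]
  refine Finset.sum_congr rfl fun a ha => ?_
  exact Finset.sum_attach (Finset.range (n - a)) (fun b => p a b * nu n m p q β (u - n + a) (v + b))

lemma nu_q0 (hm : 1 ≤ m) (hq0 : q 0 m = 0) (hu : u < n) (hv : m ≤ v) :
    nu n m p q β u v = ∑ ab ∈ TT m, q ab.1 ab.2 * nu n m p q β (u + ab.1) (v - m + ab.2) := by
  rw [nu, dif_neg (by omega), dif_pos hv]
  rw [Finset.sum_attach _ (fun a => ∑ b ∈ (Finset.range (min (m + 1 - a) m)).attach,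
      q a b.1 * nu n m p q β (u + a) (v - m + b.1))]
  rw [sum_TT_double (fun a b => q a b * nu n m p q β (u + a) (v - m + b))]
  refine Finset.sum_congr rfl fun a ha => ?_
  rw [Finset.mem_range] at ha
  rw [Finset.sum_attach _ (fun b => q a b * nu n m p q β (u + a) (v - m + b))]
  refine Finset.sum_subset ?_ ?_
  · intro b hb
    rw [Finset.mem_range] at *
    omega
  · intro b hb hnb
    rw [Finset.mem_range] at hb
    rw [Finset.mem_range] at hnb
    have hab : a = 0 ∧ b = m := by omega
    rw [hab.1, hab.2, hq0, zero_mul]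

lemma nu_normal (hu : u < n) (hv : v < m) : nu n m p q β u v = β u v := by
  rw [nu, dif_neg (by omega), dif_neg (by omega)]

/-- TT n - version of the p-branch. -/
lemma nu_p' (hn : 1 ≤ n) (hp : DegLE p (n - 1)) (hu : n ≤ u) :
    nu n m p q β u v = ∑ ab ∈ TT n, p ab.1 ab.2 * nu n m p q β (u - n + ab.1) (v + ab.2) := by
  rw [nu_p hn hu]
  refine Finset.sum_subset (TT_subset (by omega)) fun x hx hnx => ?_
  rw [mem_TT] at hnx
  rw [hp x.1 x.2 (by omega), zero_mul]

/-- Confluence: the q-reduction identity holds for every `u`. -/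
lemma nu_q (hn : 1 ≤ n) (hm : 1 ≤ m) (hp : DegLE p (n - 1)) (hq0 : q 0 m = 0) :
    ∀ u v, m ≤ v →
      nu n m p q β u v = ∑ ab ∈ TT m, q ab.1 ab.2 * nu n m p q β (u + ab.1) (v - m + ab.2) := by
  intro u
  induction u using Nat.strong_induction_on with
  | _ u IH =>
    intro v hv
    by_cases hu : u < n
    · exact nu_q0 hm hq0 hu hv
    push_neg at hu
    rw [nu_p hn hu]
    have LHS : ∀ ab : ℕ × ℕ, ab ∈ TT (n - 1) →
        p ab.1 ab.2 * nu n m p q β (u - n + ab.1) (v + ab.2)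
          = p ab.1 ab.2 * ∑ cd ∈ TT m, q cd.1 cd.2 *
              nu n m p q β (u - n + ab.1 + cd.1) (v + ab.2 - m + cd.2) := by
      intro ab hab
      rw [mem_TT] at hab
      rw [IH (u - n + ab.1) (by omega) (v + ab.2) (by omega)]
    rw [Finset.sum_congr rfl LHS]
    have RHS : ∀ cd : ℕ × ℕ, cd ∈ TT m →
        q cd.1 cd.2 * nu n m p q β (u + cd.1) (v - m + cd.2)
          = q cd.1 cd.2 * ∑ ab ∈ TT (n - 1), p ab.1 ab.2 *
              nu n m p q β (u + cd.1 - n + ab.1) (v - m + cd.2 + ab.2) := by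
      intro cd _
      rw [nu_p hn (by omega)]
    rw [Finset.sum_congr rfl RHS]
    simp only [Finset.mul_sum]
    rw [Finset.sum_comm]
    refine Finset.sum_congr rfl fun cd hcd => Finset.sum_congr rfl fun ab hab => ?_
    rw [mem_TT] at hcd hab
    have e1 : u - n + ab.1 + cd.1 = u + cd.1 - n + ab.1 := by omega
    have e2 : v + ab.2 - m + cd.2 = v - m + cd.2 + ab.2 := by omega
    rw [e1, e2]
    ring

end NuLemmas

section Master

variable {n m : ℕ} {β p q : ℕ → ℕ → ℝ}

lemma DegLE_Gp (hn : 1 ≤ n) (hp : DegLE p (n - 1)) : DegLE (monoC n 0 - p) n :=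
  DegLE_sub ((DegLE_monoC n 0).mono (by omega)) (hp.mono (by omega))

lemma DegLE_Gq (hq : DegLE q m) : DegLE (monoC 0 m - q) m :=
  DegLE_sub ((DegLE_monoC 0 m).mono (by omega)) hq

/-- master p-identity, sum form -/
lemma MPsum (hn : 1 ≤ n) (hp : DegLE p (n - 1)) (A B : ℕ) :
    ∑ ab ∈ TT n, (monoC n 0 - p) ab.1 ab.2 * nu n m p q β (A + ab.1) (B + ab.2) = 0 := by
  have e1 : ∑ ab ∈ TT n, (monoC n 0 - p) ab.1 ab.2 * nu n m p q β (A + ab.1) (B + ab.2)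
      = (∑ ab ∈ TT n, monoC n 0 ab.1 ab.2 * nu n m p q β (A + ab.1) (B + ab.2))
        - ∑ ab ∈ TT n, p ab.1 ab.2 * nu n m p q β (A + ab.1) (B + ab.2) := by
    simp only [Pi.sub_apply, sub_mul, Finset.sum_sub_distrib]
  rw [e1]
  have e2 : ∑ ab ∈ TT n, monoC n 0 ab.1 ab.2 * nu n m p q β (A + ab.1) (B + ab.2)
      = nu n m p q β (A + n) B := by
    rw [Finset.sum_eq_single (n, 0)]
    · simp [monoC]
    · intro b _ hb
      have : ¬(b.1 = n ∧ b.2 = 0) := by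
        rintro ⟨h1, h2⟩; exact hb (Prod.ext h1 h2)
      simp [monoC, this]
    · intro hb; exact absurd (mem_TT.mpr (by omega)) hb
  rw [e2]
  rw [nu_p' hn hp (by omega)]
  rw [sub_eq_zero]
  refine Finset.sum_congr rfl fun ab _ => ?_
  congr 2 <;> omega

/-- master q-identity, sum form -/
lemma MQsum (hn : 1 ≤ n) (hm : 1 ≤ m) (hp : DegLE p (n - 1)) (hq : DegLE q m)
    (hq0 : q 0 m = 0) (A B : ℕ) :
    ∑ ab ∈ TT m, (monoC 0 m - q) ab.1 ab.2 * nu n m p q β (A + ab.1) (B + ab.2) = 0 := by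
  have e1 : ∑ ab ∈ TT m, (monoC 0 m - q) ab.1 ab.2 * nu n m p q β (A + ab.1) (B + ab.2)
      = (∑ ab ∈ TT m, monoC 0 m ab.1 ab.2 * nu n m p q β (A + ab.1) (B + ab.2))
        - ∑ ab ∈ TT m, q ab.1 ab.2 * nu n m p q β (A + ab.1) (B + ab.2) := by
    simp only [Pi.sub_apply, sub_mul, Finset.sum_sub_distrib]
  rw [e1]
  have e2 : ∑ ab ∈ TT m, monoC 0 m ab.1 ab.2 * nu n m p q β (A + ab.1) (B + ab.2)
      = nu n m p q β A (B + m) := by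
    rw [Finset.sum_eq_single (0, m)]
    · simp [monoC]
    · intro b _ hb
      have : ¬(b.1 = 0 ∧ b.2 = m) := by
        rintro ⟨h1, h2⟩; exact hb (Prod.ext h1 h2)
      simp [monoC, this]
    · intro hb; exact absurd (mem_TT.mpr (by omega)) hb
  rw [e2]
  rw [nu_q hn hm hp hq0 A (B + m) (by omega)]
  rw [sub_eq_zero]
  refine Finset.sum_congr rfl fun ab _ => ?_
  congr 2 <;> omega

/-- master p-identity, lamF form -/
lemma MPlam (hn : 1 ≤ n) (hp : DegLE p (n - 1)) {A B N : ℕ} (hN : A + B + n ≤ N) :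
    lamF (nu n m p q β) N (shiftC A B (monoC n 0 - p)) = 0 := by
  rw [lamF_shift (DegLE_Gp hn hp) hN]
  exact MPsum hn hp A B

/-- master q-identity, lamF form -/
lemma MQlam (hn : 1 ≤ n) (hm : 1 ≤ m) (hp : DegLE p (n - 1)) (hq : DegLE q m)
    (hq0 : q 0 m = 0) {A B N : ℕ} (hN : A + B + m ≤ N) :
    lamF (nu n m p q β) N (shiftC A B (monoC 0 m - q)) = 0 := by
  rw [lamF_shift (DegLE_Gq hq) hN]
  exact MQsum hn hm hp hq hq0 A B

end Master

/-! ### Range of a symmetric matrix -/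

lemma symrange {ι : Type*} [Fintype ι] [DecidableEq ι] (M : Matrix ι ι ℝ)
    (hsym : Mᵀ = M) (w : ι → ℝ) (hw : ∀ v, M *ᵥ v = 0 → w ⬝ᵥ v = 0) :
    ∃ u, w = M *ᵥ u := by
  classical
  set f := M.mulVecLin with hf
  have key : ∀ x y : ι → ℝ, (M *ᵥ x) ⬝ᵥ y = x ⬝ᵥ (M *ᵥ y) := by
    intro x y
    rw [Matrix.dotProduct_mulVec, ← Matrix.vecMul_transpose, hsym]
  have hdisj : LinearMap.range f ⊓ LinearMap.ker f = ⊥ := by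
    rw [Submodule.eq_bot_iff]
    intro x hx
    rw [Submodule.mem_inf] at hx
    obtain ⟨hx1, hker⟩ := hx
    obtain ⟨u, rfl⟩ := hx1
    rw [LinearMap.mem_ker] at hker
    have h0 : (f u) ⬝ᵥ (f u) = 0 := by
      have : (M *ᵥ u) ⬝ᵥ (f u) = u ⬝ᵥ (M *ᵥ (f u)) := key u (f u)
      simp only [hf, Matrix.mulVecLin_apply] at this hker ⊢
      rw [this, hker, dotProduct_zero]
    exact dotProduct_self_eq_zero.mp h0
  have hsum : LinearMap.range f ⊔ LinearMap.ker f = ⊤ := by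
    have h1 := LinearMap.finrank_range_add_finrank_ker f
    have h2 := Submodule.finrank_sup_add_finrank_inf_eq (LinearMap.range f) (LinearMap.ker f)
    rw [hdisj] at h2
    simp only [finrank_bot, add_zero] at h2
    exact Submodule.eq_top_of_finrank_eq (by omega)
  have hw_mem : w ∈ LinearMap.range f ⊔ LinearMap.ker f := by rw [hsum]; trivial
  obtain ⟨x, hx, y, hy, hxy⟩ := Submodule.mem_sup.mp hw_mem
  obtain ⟨u, rfl⟩ := hx
  rw [LinearMap.mem_ker] at hy
  refine ⟨u, ?_⟩
  have hy' : M *ᵥ y = 0 := by simpa [hf, Matrix.mulVecLin_apply] using hy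
  have hdot1 : w ⬝ᵥ y = 0 := hw y hy'
  have hdot2 : (f u) ⬝ᵥ y = 0 := by
    have := key u y
    simp only [hf, Matrix.mulVecLin_apply] at this ⊢
    rw [this, hy', dotProduct_zero]
  have hy0 : y = 0 := by
    have : y ⬝ᵥ y = 0 := by
      have e : y = w - f u := by rw [← hxy]; ring
      calc y ⬝ᵥ y = (w - f u) ⬝ᵥ y := by rw [← e]
        _ = w ⬝ᵥ y - (f u) ⬝ᵥ y := sub_dotProduct w (f u) y
        _ = 0 := by rw [hdot1, hdot2, sub_zero]
    exact dotProduct_self_eq_zero.mp this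
  rw [← hxy, hy0, add_zero]
  simp [hf, Matrix.mulVecLin_apply]

/-! ### cMul lemmas -/

lemma cMul_monoC (h : ℕ → ℕ → ℝ) (i j : ℕ) : cMul h (monoC i j) = shiftC i j h := by
  funext k l
  simp only [cMul, monoC, shiftC]
  by_cases hij : i ≤ k ∧ j ≤ l
  · rw [if_pos hij]
    rw [Finset.sum_eq_single (k - i)]
    · rw [Finset.sum_eq_single (l - j)]
      · have e1 : k - (k - i) = i := by omega
        have e2 : l - (l - j) = j := by omega
        rw [e1, e2, if_pos ⟨rfl, rfl⟩, mul_one]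
      · intro b hb hbne
        rw [Finset.mem_range] at hb
        rw [if_neg (by omega), mul_zero]
      · intro hb
        exact absurd (Finset.mem_range.mpr (by omega)) hb
    · intro a ha hane
      rw [Finset.mem_range] at ha
      refine Finset.sum_eq_zero fun b hb => ?_
      rw [Finset.mem_range] at hb
      rw [if_neg (by omega), mul_zero]
    · intro ha
      exact absurd (Finset.mem_range.mpr (by omega)) ha
  · rw [if_neg hij]
    refine Finset.sum_eq_zero fun a ha => Finset.sum_eq_zero fun b hb => ?_
    rw [Finset.mem_range] at ha hb
    rw [if_neg (by omega), mul_zero]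

lemma cMul_conv {g : ℕ → ℕ → ℝ} {Dg : ℕ} (hg : DegLE g Dg) (h : ℕ → ℕ → ℝ) :
    cMul h g = fun k l => ∑ st ∈ TT Dg, g st.1 st.2 * shiftC st.1 st.2 h k l := by
  funext k l
  have refl1 : cMul h g k l
      = ∑ s ∈ Finset.range (k + 1), ∑ t ∈ Finset.range (l + 1),
          g s t * shiftC s t h k l := by
    rw [cMul]
    rw [← Finset.sum_range_reflect]
    refine Finset.sum_congr rfl fun s hs => ?_
    rw [Finset.mem_range] at hs
    rw [← Finset.sum_range_reflect]
    refine Finset.sum_congr rfl fun t ht => ?_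
    rw [Finset.mem_range] at ht
    have e1 : k + 1 - 1 - s = k - s := by omega
    have e2 : l + 1 - 1 - t = l - t := by omega
    rw [e1, e2]
    have e3 : k - (k - s) = s := by omega
    have e4 : l - (l - t) = t := by omega
    rw [e3, e4]
    simp only [shiftC]
    rw [if_pos ⟨by omega, by omega⟩]
    ring
  rw [refl1]
  rw [← Finset.sum_product']
  have step1 : ∑ st ∈ Finset.range (k + 1) ×ˢ Finset.range (l + 1),
      g st.1 st.2 * shiftC st.1 st.2 h k l
      = ∑ st ∈ TT (Dg + k + l), g st.1 st.2 * shiftC st.1 st.2 h k l := by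
    refine Finset.sum_subset ?_ ?_
    · intro x hx
      rw [Finset.mem_product, Finset.mem_range, Finset.mem_range] at hx
      rw [mem_TT]; omega
    · intro x hx hnx
      rw [Finset.mem_product, Finset.mem_range, Finset.mem_range] at hnx
      push_neg at hnx
      have : shiftC x.1 x.2 h k l = 0 := by
        simp only [shiftC]
        rw [if_neg (by omega)]
      rw [this, mul_zero]
  have step2 : ∑ st ∈ TT Dg, g st.1 st.2 * shiftC st.1 st.2 h k l
      = ∑ st ∈ TT (Dg + k + l), g st.1 st.2 * shiftC st.1 st.2 h k l := by
    refine Finset.sum_subset (TT_subset (by omega)) fun x hx hnx => ?_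
    rw [mem_TT] at hnx
    rw [hg x.1 x.2 (by omega), zero_mul]
  rw [step1, ← step2]

lemma shiftC_cMul {g : ℕ → ℕ → ℝ} {Dg : ℕ} (hg : DegLE g Dg) (A B : ℕ) (h : ℕ → ℕ → ℝ) :
    shiftC A B (cMul h g) = cMul (shiftC A B h) g := by
  rw [cMul_conv hg h, cMul_conv hg (shiftC A B h)]
  rw [shiftC_sum A B (TT Dg) (fun st => g st.1 st.2) (fun st => shiftC st.1 st.2 h)]
  funext k l
  refine Finset.sum_congr rfl fun st _ => ?_
  congr 1
  rw [shiftC_shiftC, shiftC_shiftC]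
  congr 1 <;> omega

lemma cMul_addl (a a' b : ℕ → ℕ → ℝ) : cMul (a + a') b = cMul a b + cMul a' b := by
  funext k l
  simp only [cMul, Pi.add_apply, add_mul, Finset.sum_add_distrib]

lemma cMul_smull (c : ℝ) (a b : ℕ → ℕ → ℝ) : cMul (c • a) b = c • cMul a b := by
  funext k l
  simp only [cMul, Pi.smul_apply, smul_eq_mul, Finset.mul_sum, mul_assoc]

lemma cMul_const {b : ℕ → ℕ → ℝ} (hb : DegLE b 0) (a : ℕ → ℕ → ℝ) :
    cMul a b = fun k l => a k l * b 0 0 := by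
  funext k l
  rw [cMul]
  rw [Finset.sum_eq_single k]
  · rw [Finset.sum_eq_single l]
    · simp
    · intro j hj hjne
      rw [Finset.mem_range] at hj
      rw [hb (k - k) (l - j) (by omega), mul_zero]
    · intro hl; exact absurd (Finset.mem_range.mpr (by omega)) hl
  · intro i hi hine
    rw [Finset.mem_range] at hi
    refine Finset.sum_eq_zero fun j hj => ?_
    rw [hb (k - i) (l - j) (by omega), mul_zero]
  · intro hk; exact absurd (Finset.mem_range.mpr (by omega)) hk

/-- top-degree coefficient of a product (single surviving term). -/
lemma cMul_top {a b : ℕ → ℕ → ℝ} {A B k0 s0 : ℕ}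
    (ha : DegLE a A) (hb : DegLE b B) (hk0 : k0 ≤ A) (hs0 : s0 ≤ B)
    (hamax : ∀ i, k0 < i → a i (A - i) = 0) (hbmax : ∀ s, s0 < s → b s (B - s) = 0) :
    cMul a b (k0 + s0) (A - k0 + (B - s0)) = a k0 (A - k0) * b s0 (B - s0) := by
  rw [cMul]
  rw [Finset.sum_eq_single k0]
  · rw [Finset.sum_eq_single (A - k0)]
    · congr 2 <;> omega
    · intro j hj hjne
      rw [Finset.mem_range] at hj
      rcases Nat.lt_or_ge (k0 + j) A with hlt | hge
      · -- then the b-factor has degree > B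
        rw [hb (k0 + s0 - k0) (A - k0 + (B - s0) - j) (by omega), mul_zero]
      · -- k0 + j > A since j ≠ A - k0
        rw [ha k0 j (by omega), zero_mul]
    · intro hl; exact absurd (Finset.mem_range.mpr (by omega)) hl
  · intro i hi hine
    rw [Finset.mem_range] at hi
    refine Finset.sum_eq_zero fun j hj => ?_
    rw [Finset.mem_range] at hj
    rcases Nat.lt_or_ge (i + j) A with hlt | hge
    · rw [hb (k0 + s0 - i) (A - k0 + (B - s0) - j) (by omega), mul_zero]
    · rcases Nat.lt_or_ge A (i + j) with hgt | hle
      · rw [ha i j (by omega), zero_mul]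
      · -- i + j = A
        have hij : i + j = A := by omega
        rcases Nat.lt_or_ge k0 i with h1 | h1
        · rw [show j = A - i by omega, hamax i h1, zero_mul]
        · -- i < k0, so b-index s = k0 + s0 - i > s0 with complement summing to B
          have h2 : i < k0 := by omega
          have hbz : b (k0 + s0 - i) (A - k0 + (B - s0) - j) = 0 := by
            have e : A - k0 + (B - s0) - j = B - (k0 + s0 - i) := by omega
            rw [e]
            exact hbmax _ (by omega)
          rw [hbz, mul_zero]
  · intro hk; exact absurd (Finset.mem_range.mpr (by omega)) hk

/-! ### extension of a vector to a coefficient function -/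

def extF (d : ℕ) (v : Idx d → ℝ) : ℕ → ℕ → ℝ :=
  fun k l => if h : k + l ≤ d then v ⟨(k, l), h⟩ else 0

lemma DegLE_extF (d : ℕ) (v : Idx d → ℝ) : DegLE (extF d v) d := by
  intro k l h
  rw [extF, dif_neg (by omega)]

lemma extF_coeffVec {d : ℕ} {h : ℕ → ℕ → ℝ} (hh : DegLE h d) : extF d (coeffVec d h) = h := by
  funext k l
  rw [extF]
  split_ifs with hc
  · rfl
  · exact (hh k l (by omega)).symm

lemma coeffVec_extF {d : ℕ} (v : Idx d → ℝ) : coeffVec d (extF d v) = v := by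
  funext c
  obtain ⟨⟨k, l⟩, hc⟩ := c
  simp only [coeffVec, extF]
  rw [dif_pos hc]

lemma extF_add (d : ℕ) (v w : Idx d → ℝ) : extF d (v + w) = extF d v + extF d w := by
  funext k l
  simp only [extF, Pi.add_apply]
  split_ifs with h <;> simp

lemma extF_smul (d : ℕ) (c : ℝ) (v : Idx d → ℝ) : extF d (c • v) = c • extF d v := by
  funext k l
  simp only [extF, Pi.smul_apply, smul_eq_mul]
  split_ifs with h <;> simp

lemma extF_zero (d : ℕ) : extF d (0 : Idx d → ℝ) = 0 := by
  funext k l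
  simp only [extF, Pi.zero_apply]
  split_ifs <;> rfl

/-! ### bridge between polyCol and TT-sums -/

lemma polyCol_apply (D : ℕ) (f h : ℕ → ℕ → ℝ) (r : Idx D) :
    polyCol D f h r = ∑ ij ∈ TT D, h ij.1 ij.2 * f (r.1.1 + ij.1) (r.1.2 + ij.2) := by
  rw [polyCol, Matrix.mulVec]
  rw [show (momentMatrix D f r ⬝ᵥ coeffVec D h) = ∑ c : Idx D,
      h c.1.1 c.1.2 * f (r.1.1 + c.1.1) (r.1.2 + c.1.2) from ?_]
  · exact sum_idx_eq_TT (fun a b => h a b * f (r.1.1 + a) (r.1.2 + b))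
  · rw [dotProduct]
    refine Finset.sum_congr rfl fun c _ => ?_
    simp only [momentMatrix, coeffVec, Matrix.of_apply]
    ring

lemma momentMatrix_symm (d : ℕ) (β : ℕ → ℕ → ℝ) : (momentMatrix d β)ᵀ = momentMatrix d β := by
  ext r c
  simp only [Matrix.transpose_apply, momentMatrix, Matrix.of_apply]
  rw [Nat.add_comm c.1.1 r.1.1, Nat.add_comm c.1.2 r.1.2]

section Beta

variable {d n m : ℕ} {β p q : ℕ → ℕ → ℝ}

/-- From the degree-d kernel relations, the functional kills all monomial multiples
of `G` within degree `2d`. -/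
lemma grow_row {G : ℕ → ℕ → ℝ} {Dg : ℕ} (hG : DegLE G Dg) (hGd : Dg ≤ d)
    (hrel : ∀ i j : ℕ, i + j + Dg ≤ d →
      momentMatrix d β *ᵥ coeffVec d (shiftC i j G) = 0)
    (A B : ℕ) (hAB : A + B + Dg ≤ 2 * d) :
    ∑ ab ∈ TT Dg, G ab.1 ab.2 * β (A + ab.1) (B + ab.2) = 0 := by
  set i := min A (d - Dg) with hi
  set j := min B (d - Dg - i) with hj
  have hij : i + j + Dg ≤ d := by omega
  have hr : (A - i) + (B - j) ≤ d := by omega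
  have hrow := congrFun (hrel i j hij) ⟨(A - i, B - j), hr⟩
  rw [show (momentMatrix d β *ᵥ coeffVec d (shiftC i j G)) = polyCol d β (shiftC i j G) from rfl]
    at hrow
  rw [polyCol_apply] at hrow
  simp only [Pi.zero_apply] at hrow
  rw [show (∑ ij ∈ TT d, shiftC i j G ij.1 ij.2 * β (A - i + ij.1) (B - j + ij.2))
      = lamF (fun u v => β (A - i + u) (B - j + v)) d (shiftC i j G) from rfl] at hrow
  rw [lamF_shift hG (by omega)] at hrow
  rw [← hrow]
  refine Finset.sum_congr rfl fun ab _ => ?_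
  congr 2 <;> omega

/-- The extension functional agrees with `β` up to degree `2d`. -/
lemma nu_eq_beta (hn : 1 ≤ n) (hm : 1 ≤ m) (hnd : n ≤ d) (hmd : m ≤ d)
    (hp : DegLE p (n - 1)) (hq : DegLE q m) (hq0 : q 0 m = 0)
    (hrelp : ∀ i j : ℕ, i + j + n ≤ d →
      momentMatrix d β *ᵥ coeffVec d (shiftC i j (monoC n 0 - p)) = 0)
    (hrelq : ∀ i j : ℕ, i + j + m ≤ d →
      momentMatrix d β *ᵥ coeffVec d (shiftC i j (monoC 0 m - q)) = 0) :
    ∀ u v : ℕ, u + v ≤ 2 * d → nu n m p q β u v = β u v := by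
  -- split-form of grow_row for p and q
  have growp : ∀ A B : ℕ, A + B + n ≤ 2 * d →
      β (A + n) B = ∑ ab ∈ TT n, p ab.1 ab.2 * β (A + ab.1) (B + ab.2) := by
    intro A B hAB
    have h0 := grow_row (DegLE_Gp hn hp) hnd hrelp A B hAB
    have e1 : ∑ ab ∈ TT n, (monoC n 0 - p) ab.1 ab.2 * β (A + ab.1) (B + ab.2)
        = (∑ ab ∈ TT n, monoC n 0 ab.1 ab.2 * β (A + ab.1) (B + ab.2))
          - ∑ ab ∈ TT n, p ab.1 ab.2 * β (A + ab.1) (B + ab.2) := by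
      simp only [Pi.sub_apply, sub_mul, Finset.sum_sub_distrib]
    have e2 : ∑ ab ∈ TT n, monoC n 0 ab.1 ab.2 * β (A + ab.1) (B + ab.2) = β (A + n) B := by
      rw [Finset.sum_eq_single (n, 0)]
      · simp [monoC]
      · intro b _ hb
        have : ¬(b.1 = n ∧ b.2 = 0) := by rintro ⟨h1, h2⟩; exact hb (Prod.ext h1 h2)
        simp [monoC, this]
      · intro hb; exact absurd (mem_TT.mpr (by omega)) hb
    rw [e1, e2] at h0
    linarith
  have growq : ∀ A B : ℕ, A + B + m ≤ 2 * d →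
      β A (B + m) = ∑ ab ∈ TT m, q ab.1 ab.2 * β (A + ab.1) (B + ab.2) := by
    intro A B hAB
    have h0 := grow_row (DegLE_Gq hq) hmd hrelq A B hAB
    have e1 : ∑ ab ∈ TT m, (monoC 0 m - q) ab.1 ab.2 * β (A + ab.1) (B + ab.2)
        = (∑ ab ∈ TT m, monoC 0 m ab.1 ab.2 * β (A + ab.1) (B + ab.2))
          - ∑ ab ∈ TT m, q ab.1 ab.2 * β (A + ab.1) (B + ab.2) := by
      simp only [Pi.sub_apply, sub_mul, Finset.sum_sub_distrib]
    have e2 : ∑ ab ∈ TT m, monoC 0 m ab.1 ab.2 * β (A + ab.1) (B + ab.2) = β A (B + m) := by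
      rw [Finset.sum_eq_single (0, m)]
      · simp [monoC]
      · intro b _ hb
        have : ¬(b.1 = 0 ∧ b.2 = m) := by rintro ⟨h1, h2⟩; exact hb (Prod.ext h1 h2)
        simp [monoC, this]
      · intro hb; exact absurd (mem_TT.mpr (by omega)) hb
    rw [e1, e2] at h0
    linarith
  -- double strong induction: outer on the total degree s, inner on v
  suffices H : ∀ s : ℕ, ∀ v u : ℕ, u + v = s → u + v ≤ 2 * d → nu n m p q β u v = β u v by
    intro u v h; exact H (u + v) v u rfl h
  intro s
  induction s using Nat.strong_induction_on with
  | _ s IHs =>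
    intro v
    induction v using Nat.strong_induction_on with
    | _ v IHv =>
      intro u hs hdeg
      by_cases hu : n ≤ u
      · rw [nu_p' hn hp hu]
        have hβ : β u v = ∑ ab ∈ TT n, p ab.1 ab.2 * β (u - n + ab.1) (v + ab.2) := by
          have := growp (u - n) v (by omega)
          rw [show u - n + n = u by omega] at this
          exact this
        rw [hβ]
        refine Finset.sum_congr rfl fun ab hab => ?_
        rw [mem_TT] at hab
        by_cases hz : p ab.1 ab.2 = 0
        · rw [hz, zero_mul, zero_mul]
        · have hd : ab.1 + ab.2 ≤ n - 1 := by
            by_contra hc; exact hz (hp ab.1 ab.2 (by omega))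
          rw [IHs (u - n + ab.1 + (v + ab.2)) (by omega) (v + ab.2) (u - n + ab.1) rfl (by omega)]
      · by_cases hv : m ≤ v
        · rw [nu_q hn hm hp hq0 u v hv]
          have hβ : β u v = ∑ ab ∈ TT m, q ab.1 ab.2 * β (u + ab.1) (v - m + ab.2) := by
            have := growq u (v - m) (by omega)
            rw [show v - m + m = v by omega] at this
            exact this
          rw [hβ]
          refine Finset.sum_congr rfl fun ab hab => ?_
          rw [mem_TT] at hab
          by_cases hz : q ab.1 ab.2 = 0
          · rw [hz, zero_mul, zero_mul]
          · have hbm : ab.2 ≤ m - 1 := by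
              by_contra hc
              push_neg at hc
              have : ab.2 = m := by omega
              have : ab.1 = 0 := by
                by_contra hc2
                exact hz (hq ab.1 ab.2 (by omega))
              apply hz
              rw [this, ‹ab.2 = m›]
              exact hq0
            by_cases hlow : ab.1 + ab.2 ≤ m - 1
            · rw [IHs (u + ab.1 + (v - m + ab.2)) (by omega) (v - m + ab.2) (u + ab.1) rfl
                (by omega)]
            · -- same total degree, smaller second index
              have habm : ab.1 + ab.2 = m := by omega
              rw [IHv (v - m + ab.2) (by omega) (u + ab.1) (by omega) (by omega)]
        · exact nu_normal (by omega) (by omega)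

end Beta

/-! ### more small lemmas -/

lemma cMul_zerol (b : ℕ → ℕ → ℝ) : cMul 0 b = 0 := by
  funext k l
  simp [cMul]

lemma shiftC_zero_fun (A B : ℕ) : shiftC A B (0 : ℕ → ℕ → ℝ) = 0 := by
  funext k l
  simp only [shiftC, Pi.zero_apply]
  split_ifs <;> rfl

lemma lamF_zero (f : ℕ → ℕ → ℝ) (N : ℕ) : lamF f N 0 = 0 := by
  simp [lamF]

lemma sum_TT_subPoly {Dg U V : ℕ} (g : ℕ → ℕ → ℝ) (f : ℕ → ℕ → ℝ) (hUV : U + V ≤ Dg) :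
    ∑ ab ∈ TT Dg, (monoC U V - g) ab.1 ab.2 * f ab.1 ab.2
      = f U V - ∑ ab ∈ TT Dg, g ab.1 ab.2 * f ab.1 ab.2 := by
  simp only [Pi.sub_apply, sub_mul, Finset.sum_sub_distrib]
  congr 1
  rw [Finset.sum_eq_single (U, V)]
  · simp [monoC]
  · intro b _ hb
    have : ¬(b.1 = U ∧ b.2 = V) := by rintro ⟨h1, h2⟩; exact hb (Prod.ext h1 h2)
    simp [monoC, this]
  · intro hb; exact absurd (mem_TT.mpr hUV) hb

section TOT

variable {n m : ℕ} {β p q : ℕ → ℕ → ℝ}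

/-- killing products of shifted generators with arbitrary polynomials. -/
lemma lamF_cMul_gen {G : ℕ → ℕ → ℝ} {Dg : ℕ} (hG : DegLE G Dg)
    (master : ∀ A B N : ℕ, A + B + Dg ≤ N → lamF (nu n m p q β) N (shiftC A B G) = 0)
    {b : ℕ → ℕ → ℝ} {Db : ℕ} (hb : DegLE b Db) (s t N : ℕ) (hN : s + t + Dg + Db ≤ N) :
    lamF (nu n m p q β) N (cMul (shiftC s t G) b) = 0 := by
  rw [cMul_conv hb (shiftC s t G)]
  rw [lamF_sum (nu n m p q β) N (TT Db) (fun st => b st.1 st.2)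
    (fun st => shiftC st.1 st.2 (shiftC s t G))]
  refine Finset.sum_eq_zero fun st hst => ?_
  rw [mem_TT] at hst
  rw [shiftC_shiftC]
  rw [master (st.1 + s) (st.2 + t) N (by omega), mul_zero]

end TOT

section Rows

variable {d n m : ℕ} {β p q : ℕ → ℕ → ℝ}

lemma rowP {β₁ : ℕ → ℕ → ℝ} (hn : 1 ≤ n) (hnd : n ≤ d) (hp : DegLE p (n - 1))
    (hrel : ∀ i j : ℕ, i + j + n ≤ d + 1 → polyCol (d + 1) β₁ (shiftC i j (monoC n 0 - p)) = 0)
    {u v : ℕ} (h1 : d + 1 ≤ u + v) (h2 : u + v ≤ 2 * d + 2) (hu : n ≤ u) :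
    β₁ u v = ∑ ab ∈ TT n, p ab.1 ab.2 * β₁ (u - n + ab.1) (v + ab.2) := by
  set j := min v (d + 1 - n) with hj
  set i := d + 1 - n - j with hi
  have hni : n + i ≤ u := by omega
  have hjv : j ≤ v := by omega
  have hr : (u - (n + i)) + (v - j) ≤ d + 1 := by omega
  have hrow := congrFun (hrel i j (by omega)) ⟨(u - (n + i), v - j), hr⟩
  rw [polyCol_apply] at hrow
  simp only [Pi.zero_apply] at hrow
  rw [show (∑ ij ∈ TT (d + 1), shiftC i j (monoC n 0 - p) ij.1 ij.2 *
      β₁ (u - (n + i) + ij.1) (v - j + ij.2))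
      = lamF (fun x y => β₁ (u - (n + i) + x) (v - j + y)) (d + 1)
        (shiftC i j (monoC n 0 - p)) from rfl] at hrow
  rw [lamF_shift (DegLE_Gp hn hp) (by omega)] at hrow
  rw [sum_TT_subPoly p (fun x y => β₁ (u - (n + i) + (i + x)) (v - j + (j + y))) (by omega)]
    at hrow
  have e0 : u - (n + i) + (i + n) = u := by omega
  have e0' : v - j + (j + 0) = v := by omega
  rw [e0, e0'] at hrow
  have e1 : β₁ u v = ∑ ab ∈ TT n, p ab.1 ab.2 *
      β₁ (u - (n + i) + (i + ab.1)) (v - j + (j + ab.2)) := by linarith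
  rw [e1]
  refine Finset.sum_congr rfl fun ab _ => ?_
  congr 2 <;> omega

lemma rowQ {β₁ : ℕ → ℕ → ℝ} (hm : 1 ≤ m) (hmd : m ≤ d) (hq : DegLE q m)
    (hrel : ∀ i j : ℕ, i + j + m ≤ d + 1 → polyCol (d + 1) β₁ (shiftC i j (monoC 0 m - q)) = 0)
    {u v : ℕ} (h1 : d + 1 ≤ u + v) (h2 : u + v ≤ 2 * d + 2) (hv : m ≤ v) :
    β₁ u v = ∑ ab ∈ TT m, q ab.1 ab.2 * β₁ (u + ab.1) (v - m + ab.2) := by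
  set k := min u (d + 1 - m) with hk
  set g := d + 1 - m - k with hg
  have hmg : m + g ≤ v := by omega
  have hku : k ≤ u := by omega
  have hr : (u - k) + (v - (m + g)) ≤ d + 1 := by omega
  have hrow := congrFun (hrel k g (by omega)) ⟨(u - k, v - (m + g)), hr⟩
  rw [polyCol_apply] at hrow
  simp only [Pi.zero_apply] at hrow
  rw [show (∑ ij ∈ TT (d + 1), shiftC k g (monoC 0 m - q) ij.1 ij.2 *
      β₁ (u - k + ij.1) (v - (m + g) + ij.2))
      = lamF (fun x y => β₁ (u - k + x) (v - (m + g) + y)) (d + 1)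
        (shiftC k g (monoC 0 m - q)) from rfl] at hrow
  rw [lamF_shift (DegLE_Gq hq) (by omega)] at hrow
  rw [sum_TT_subPoly q (fun x y => β₁ (u - k + (k + x)) (v - (m + g) + (g + y))) (by omega)]
    at hrow
  have e0 : u - k + (k + 0) = u := by omega
  have e0' : v - (m + g) + (g + m) = v := by omega
  rw [e0, e0'] at hrow
  have e1 : β₁ u v = ∑ ab ∈ TT m, q ab.1 ab.2 *
      β₁ (u - k + (k + ab.1)) (v - (m + g) + (g + ab.2)) := by linarith
  rw [e1]
  refine Finset.sum_congr rfl fun ab _ => ?_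
  congr 2 <;> omega

/-- dot product of a `ν`-column with a shifted-generator kernel vector vanishes. -/
lemma dot_gen {G : ℕ → ℕ → ℝ} {Dg : ℕ} (hG : DegLE G Dg)
    (master : ∀ A B : ℕ,
      ∑ ab ∈ TT Dg, G ab.1 ab.2 * nu n m p q β (A + ab.1) (B + ab.2) = 0)
    (c1 c2 i j : ℕ) (hij : i + j + Dg ≤ d) :
    (fun r : Idx d => nu n m p q β (r.1.1 + c1) (r.1.2 + c2)) ⬝ᵥ
      coeffVec d (shiftC i j G) = 0 := by
  rw [dotProduct]
  have e : ∑ r : Idx d, nu n m p q β (r.1.1 + c1) (r.1.2 + c2) * coeffVec d (shiftC i j G) r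
      = lamF (fun x y => nu n m p q β (x + c1) (y + c2)) d (shiftC i j G) := by
    rw [show (∑ r : Idx d, nu n m p q β (r.1.1 + c1) (r.1.2 + c2) * coeffVec d (shiftC i j G) r)
        = ∑ r : Idx d, nu n m p q β (r.1.1 + c1) (r.1.2 + c2) * shiftC i j G r.1.1 r.1.2
        from rfl]
    rw [sum_idx_eq_TT (fun x y => nu n m p q β (x + c1) (y + c2) * shiftC i j G x y)]
    exact Finset.sum_congr rfl fun ab _ => by ring
  rw [e, lamF_shift hG (by omega)]
  refine Eq.trans ?_ (master (c1 + i) (c2 + j))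
  refine Finset.sum_congr rfl fun ab _ => ?_
  congr 2 <;> omega

end Rows


section Main

variable {d n m : ℕ} {β p q : ℕ → ℕ → ℝ}

/-- uniqueness of RG extensions. -/
lemma rg_unique (hn : 1 ≤ n) (hm : 1 ≤ m) (hnd : n ≤ d) (hmd : m ≤ d)
    (hp : DegLE p (n - 1)) (hq : DegLE q m) (hq0 : q 0 m = 0)
    (hP0 : polyCol d β (monoC n 0 - p) = 0) (hQ0 : polyCol d β (monoC 0 m - q) = 0)
    (β₁ β₂ : ℕ → ℕ → ℝ) (h₁ : RGExtension d β β₁) (h₂ : RGExtension d β β₂) :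
    ∀ i j : ℕ, i + j ≤ 2 * d + 2 → β₁ i j = β₂ i j := by
  have mkrelp : ∀ (γ : ℕ → ℕ → ℝ), RGExtension d β γ → ∀ i j : ℕ, i + j + n ≤ d + 1 →
      polyCol (d + 1) γ (shiftC i j (monoC n 0 - p)) = 0 := by
    intro γ hγ i j hij
    have base : polyCol (d + 1) γ (monoC n 0 - p) = 0 :=
      hγ.2.2.1 _ ((DegLE_Gp hn hp).mono (by omega)) hP0
    have hrec := hγ.2.2.2 (monoC n 0 - p) (monoC i j) ((DegLE_Gp hn hp).mono (by omega))
      ((DegLE_monoC i j).mono (by omega))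
      (by rw [cMul_monoC]; exact (DegLE_shiftC (DegLE_Gp hn hp) i j).mono (by omega)) base
    rwa [cMul_monoC] at hrec
  have mkrelq : ∀ (γ : ℕ → ℕ → ℝ), RGExtension d β γ → ∀ i j : ℕ, i + j + m ≤ d + 1 →
      polyCol (d + 1) γ (shiftC i j (monoC 0 m - q)) = 0 := by
    intro γ hγ i j hij
    have base : polyCol (d + 1) γ (monoC 0 m - q) = 0 :=
      hγ.2.2.1 _ ((DegLE_Gq hq).mono (by omega)) hQ0
    have hrec := hγ.2.2.2 (monoC 0 m - q) (monoC i j) ((DegLE_Gq hq).mono (by omega))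
      ((DegLE_monoC i j).mono (by omega))
      (by rw [cMul_monoC]; exact (DegLE_shiftC (DegLE_Gq hq) i j).mono (by omega)) base
    rwa [cMul_monoC] at hrec
  suffices H : ∀ s : ℕ, ∀ v u : ℕ, u + v = s → u + v ≤ 2 * d + 2 → β₁ u v = β₂ u v by
    intro i j hij; exact H (i + j) j i rfl hij
  intro s
  induction s using Nat.strong_induction_on with
  | _ s IHs =>
    intro v
    induction v using Nat.strong_induction_on with
    | _ v IHv =>
      intro u hs hdeg
      by_cases hlow : u + v ≤ 2 * d
      · rw [h₁.1 u v hlow, h₂.1 u v hlow]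
      · push_neg at hlow
        by_cases hu : n ≤ u
        · rw [rowP hn hnd hp (mkrelp β₁ h₁) (by omega) (by omega) hu,
            rowP hn hnd hp (mkrelp β₂ h₂) (by omega) (by omega) hu]
          refine Finset.sum_congr rfl fun ab hab => ?_
          rw [mem_TT] at hab
          by_cases hz : p ab.1 ab.2 = 0
          · rw [hz, zero_mul, zero_mul]
          · have hd : ab.1 + ab.2 ≤ n - 1 := by
              by_contra hc; exact hz (hp ab.1 ab.2 (by omega))
            rw [IHs (u - n + ab.1 + (v + ab.2)) (by omega) (v + ab.2) (u - n + ab.1) rfl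
              (by omega)]
        · have hv : m ≤ v := by omega
          rw [rowQ hm hmd hq (mkrelq β₁ h₁) (by omega) (by omega) hv,
            rowQ hm hmd hq (mkrelq β₂ h₂) (by omega) (by omega) hv]
          refine Finset.sum_congr rfl fun ab hab => ?_
          rw [mem_TT] at hab
          by_cases hz : q ab.1 ab.2 = 0
          · rw [hz, zero_mul, zero_mul]
          · have hbm : ab.2 ≤ m - 1 := by
              by_contra hc
              push_neg at hc
              have h2m : ab.2 = m := by omega
              have h1z : ab.1 = 0 := by omega
              apply hz; rw [h1z, h2m]; exact hq0
            by_cases hlow2 : ab.1 + ab.2 ≤ m - 1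
            · rw [IHs (u + ab.1 + (v - m + ab.2)) (by omega) (v - m + ab.2) (u + ab.1) rfl
                (by omega)]
            · rw [IHv (v - m + ab.2) (by omega) (u + ab.1) (by omega) (by omega)]

end Main

section Exist

variable {d n m : ℕ} {β p q : ℕ → ℕ → ℝ}

lemma rg_exists (hn : 1 ≤ n) (hm : 1 ≤ m) (hnd : n ≤ d) (hmd : m ≤ d)
    (hp : DegLE p (n - 1)) (hq : DegLE q m) (hq0 : q 0 m = 0)
    (hker : ∀ v : Idx d → ℝ,
      momentMatrix d β *ᵥ v = 0 ↔
        v ∈ Submodule.span ℝ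
          {w : Idx d → ℝ |
            (∃ i j : ℕ, n + i + j ≤ d ∧ w = coeffVec d (shiftC i j (monoC n 0 - p))) ∨
            (∃ k l : ℕ, m + k + l ≤ d ∧ w = coeffVec d (shiftC k l (monoC 0 m - q)))}) :
    RGExtension d β (nu n m p q β) ∧
    (∀ i j : ℕ, i + j + n ≤ d + 1 →
      polyCol (d + 1) (nu n m p q β) (shiftC i j (monoC n 0 - p)) = 0) ∧
    (∀ i j : ℕ, i + j + m ≤ d + 1 →
      polyCol (d + 1) (nu n m p q β) (shiftC i j (monoC 0 m - q)) = 0) := by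
  classical
  have hrelp : ∀ i j : ℕ, i + j + n ≤ d →
      momentMatrix d β *ᵥ coeffVec d (shiftC i j (monoC n 0 - p)) = 0 := fun i j hij =>
    (hker _).mpr (Submodule.subset_span (Or.inl ⟨i, j, by omega, rfl⟩))
  have hrelq : ∀ i j : ℕ, i + j + m ≤ d →
      momentMatrix d β *ᵥ coeffVec d (shiftC i j (monoC 0 m - q)) = 0 := fun i j hij =>
    (hker _).mpr (Submodule.subset_span (Or.inr ⟨i, j, by omega, rfl⟩))
  have hbeta : ∀ u v : ℕ, u + v ≤ 2 * d → nu n m p q β u v = β u v :=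
    nu_eq_beta hn hm hnd hmd hp hq hq0 hrelp hrelq
  have MP : ∀ A B N : ℕ, A + B + n ≤ N →
      lamF (nu n m p q β) N (shiftC A B (monoC n 0 - p)) = 0 := fun A B N hN => MPlam hn hp hN
  have MQ : ∀ A B N : ℕ, A + B + m ≤ N →
      lamF (nu n m p q β) N (shiftC A B (monoC 0 m - q)) = 0 := fun A B N hN =>
    MQlam hn hm hp hq hq0 hN
  have MPs : ∀ A B : ℕ,
      ∑ ab ∈ TT n, (monoC n 0 - p) ab.1 ab.2 * nu n m p q β (A + ab.1) (B + ab.2) = 0 :=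
    MPsum hn hp
  have MQs : ∀ A B : ℕ,
      ∑ ab ∈ TT m, (monoC 0 m - q) ab.1 ab.2 * nu n m p q β (A + ab.1) (B + ab.2) = 0 :=
    MQsum hn hm hp hq hq0
  have CLP : ∀ i j : ℕ, i + j + n ≤ d + 1 →
      polyCol (d + 1) (nu n m p q β) (shiftC i j (monoC n 0 - p)) = 0 := by
    intro i j hij
    funext r
    simp only [Pi.zero_apply]
    rw [polyCol_apply]
    rw [show (∑ ij ∈ TT (d + 1), shiftC i j (monoC n 0 - p) ij.1 ij.2 *
        nu n m p q β (r.1.1 + ij.1) (r.1.2 + ij.2))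
        = lamF (fun x y => nu n m p q β (r.1.1 + x) (r.1.2 + y)) (d + 1)
          (shiftC i j (monoC n 0 - p)) from rfl]
    rw [lamF_shift (DegLE_Gp hn hp) hij]
    refine Eq.trans ?_ (MPs (r.1.1 + i) (r.1.2 + j))
    refine Finset.sum_congr rfl fun ab _ => ?_
    rw [show r.1.1 + (i + ab.1) = r.1.1 + i + ab.1 from by omega,
      show r.1.2 + (j + ab.2) = r.1.2 + j + ab.2 from by omega]
  have CLQ : ∀ i j : ℕ, i + j + m ≤ d + 1 →
      polyCol (d + 1) (nu n m p q β) (shiftC i j (monoC 0 m - q)) = 0 := by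
    intro i j hij
    funext r
    simp only [Pi.zero_apply]
    rw [polyCol_apply]
    rw [show (∑ ij ∈ TT (d + 1), shiftC i j (monoC 0 m - q) ij.1 ij.2 *
        nu n m p q β (r.1.1 + ij.1) (r.1.2 + ij.2))
        = lamF (fun x y => nu n m p q β (r.1.1 + x) (r.1.2 + y)) (d + 1)
          (shiftC i j (monoC 0 m - q)) from rfl]
    rw [lamF_shift (DegLE_Gq hq) hij]
    refine Eq.trans ?_ (MQs (r.1.1 + i) (r.1.2 + j))
    refine Finset.sum_congr rfl fun ab _ => ?_
    rw [show r.1.1 + (i + ab.1) = r.1.1 + i + ab.1 from by omega,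
      show r.1.2 + (j + ab.2) = r.1.2 + j + ab.2 from by omega]
  refine ⟨⟨hbeta, ?_, ?_, ?_⟩, CLP, CLQ⟩
  · -- columns of B(d+1) lie in the range of M_d
    intro c
    apply symrange (momentMatrix d β) (momentMatrix_symm d β)
    intro v hv
    have hvs := (hker v).mp hv
    refine Submodule.span_induction
      (p := fun w _ =>
        (fun r : Idx d => nu n m p q β (r.1.1 + c.1.1) (r.1.2 + c.1.2)) ⬝ᵥ w = 0)
      ?_ ?_ ?_ ?_ hvs
    · rintro w (⟨i, j, hij, rfl⟩ | ⟨i, j, hij, rfl⟩)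
      · exact dot_gen (DegLE_Gp hn hp) MPs c.1.1 c.1.2 i j (by omega)
      · exact dot_gen (DegLE_Gq hq) MQs c.1.1 c.1.2 i j (by omega)
    · exact dotProduct_zero _
    · intro x y _ _ hx hy
      rw [dotProduct_add, hx, hy, add_zero]
    · intro a x _ hx
      rw [dotProduct_smul, hx, smul_zero]
  · -- old column relations extend
    intro a ha h0
    have h0' : momentMatrix d β *ᵥ coeffVec d a = 0 := h0
    have hvs := (hker (coeffVec d a)).mp h0'
    funext r
    simp only [Pi.zero_apply]
    have hdeg : DegLE a (d + 1) := ha.mono (by omega)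
    rw [polyCol_apply]
    rw [← lamF_shift hdeg (le_refl (r.1.1 + r.1.2 + (d + 1)))]
    rw [show a = extF d (coeffVec d a) from (extF_coeffVec ha).symm]
    refine Submodule.span_induction
      (p := fun w _ =>
        lamF (nu n m p q β) (r.1.1 + r.1.2 + (d + 1)) (shiftC r.1.1 r.1.2 (extF d w)) = 0)
      ?_ ?_ ?_ ?_ hvs
    · rintro w (⟨i, j, hij, rfl⟩ | ⟨i, j, hij, rfl⟩)
      · rw [extF_coeffVec ((DegLE_shiftC (DegLE_Gp hn hp) i j).mono (by omega)), shiftC_shiftC]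
        exact MP _ _ _ (by have := r.2; omega)
      · rw [extF_coeffVec ((DegLE_shiftC (DegLE_Gq hq) i j).mono (by omega)), shiftC_shiftC]
        exact MQ _ _ _ (by have := r.2; omega)
    · simp only [extF_zero, shiftC_zero_fun, lamF_zero]
    · intro x y _ _ hx hy
      rw [extF_add, shiftC_add, lamF_add, hx, hy, add_zero]
    · intro cc x _ hx
      rw [extF_smul, shiftC_smul, lamF_smul, hx, mul_zero]
  · -- recursive generation at level d+1
    intro a b ha hb hab h0
    by_cases htop : ∀ k l : ℕ, k + l = d + 1 → a k l = 0
    · have ha' : DegLE a d := by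
        intro k l hkl
        rcases Nat.lt_or_ge (k + l) (d + 2) with h | h
        · exact htop k l (by omega)
        · exact ha k l (by omega)
      have h0d : momentMatrix d β *ᵥ coeffVec d a = 0 := by
        have hface : polyCol d β a = 0 := by
          funext r
          simp only [Pi.zero_apply]
          have hrow := congrFun h0 (⟨(r.1.1, r.1.2), by have := r.2; omega⟩ : Idx (d + 1))
          rw [polyCol_apply] at hrow
          simp only [Pi.zero_apply] at hrow
          rw [polyCol_apply]
          refine Eq.trans ?_ hrow
          refine Eq.trans (Finset.sum_congr rfl fun ab hab' => ?_)
            (Finset.sum_subset (TT_subset (by omega)) fun x hx hnx => ?_)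
          · rw [mem_TT] at hab'
            rw [hbeta (r.1.1 + ab.1) (r.1.2 + ab.2) (by have := r.2; omega)]
          · rw [mem_TT] at hnx
            rw [ha' x.1 x.2 (by omega), zero_mul]
        exact hface
      have hvs := (hker (coeffVec d a)).mp h0d
      funext r
      simp only [Pi.zero_apply]
      rw [polyCol_apply]
      rw [← lamF_shift hab (le_refl (r.1.1 + r.1.2 + (d + 1)))]
      rw [← lamF_congr (DegLE_shiftC hab r.1.1 r.1.2)
        (show r.1.1 + r.1.2 + (d + 1) ≤ 4 * d + 4 from by have := r.2; omega)]
      rw [show a = extF d (coeffVec d a) from (extF_coeffVec ha').symm]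
      refine Submodule.span_induction
        (p := fun w _ =>
          lamF (nu n m p q β) (4 * d + 4) (shiftC r.1.1 r.1.2 (cMul (extF d w) b)) = 0)
        ?_ ?_ ?_ ?_ hvs
      · rintro w (⟨i, j, hij, rfl⟩ | ⟨i, j, hij, rfl⟩)
        · rw [extF_coeffVec ((DegLE_shiftC (DegLE_Gp hn hp) i j).mono (by omega))]
          rw [shiftC_cMul hb, shiftC_shiftC]
          exact lamF_cMul_gen (DegLE_Gp hn hp) MP hb _ _ _ (by have := r.2; omega)
        · rw [extF_coeffVec ((DegLE_shiftC (DegLE_Gq hq) i j).mono (by omega))]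
          rw [shiftC_cMul hb, shiftC_shiftC]
          exact lamF_cMul_gen (DegLE_Gq hq) MQ hb _ _ _ (by have := r.2; omega)
      · simp only [extF_zero, cMul_zerol, shiftC_zero_fun, lamF_zero]
      · intro x y _ _ hx hy
        rw [extF_add, cMul_addl, shiftC_add, lamF_add, hx, hy, add_zero]
      · intro cc x _ hx
        rw [extF_smul, cMul_smull, shiftC_smul, lamF_smul, hx, mul_zero]
    · push_neg at htop
      obtain ⟨k, l, hkl, hne⟩ := htop
      have hb0 : DegLE b 0 := by
        intro K L hKL0
        by_contra hbne
        have hKL' : K + L ≤ d + 1 := by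
          by_contra hc; exact hbne (hb K L (by omega))
        set PB : ℕ → Prop := fun e => ∃ s, s ≤ e ∧ b s (e - s) ≠ 0 with hPB
        have hPBKL : PB (K + L) :=
          ⟨K, by omega, by rw [show K + L - K = L from by omega]; exact hbne⟩
        set B := Nat.findGreatest PB (d + 1) with hBdef
        have hBspec : PB B := Nat.findGreatest_spec (by omega) hPBKL
        have hBge : K + L ≤ B := Nat.le_findGreatest (by omega) hPBKL
        have hbB : DegLE b B := by
          intro s t hst
          by_contra hbst
          have hPBst : PB (s + t) :=
            ⟨s, by omega, by rw [show s + t - s = t from by omega]; exact hbst⟩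
          rcases Nat.lt_or_ge (s + t) (d + 2) with hsd | hsd
          · exact (Nat.findGreatest_is_greatest (P := PB) (n := d + 1) (by omega) (by omega)) hPBst
          · exact hbst (hb s t (by omega))
        obtain ⟨sB, hsBle, hsBne⟩ := hBspec
        set k0 := Nat.findGreatest (fun i => a i (d + 1 - i) ≠ 0) (d + 1) with hk0def
        have hk0spec : a k0 (d + 1 - k0) ≠ 0 :=
          Nat.findGreatest_spec (P := fun i => a i (d + 1 - i) ≠ 0) (show k ≤ d + 1 from by omega)
            (show a k (d + 1 - k) ≠ 0 from by
              rw [show d + 1 - k = l from by omega]; exact hne)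
        have hk0le : k0 ≤ d + 1 := Nat.findGreatest_le (d + 1)
        have hk0max : ∀ i, k0 < i → a i (d + 1 - i) = 0 := by
          intro i hi
          rcases Nat.lt_or_ge (d + 1) i with h | h
          · exact ha i (d + 1 - i) (by omega)
          · by_contra hc; exact (Nat.findGreatest_is_greatest hi h) hc
        set s0 := Nat.findGreatest (fun s => b s (B - s) ≠ 0) B with hs0def
        have hs0spec : b s0 (B - s0) ≠ 0 :=
          Nat.findGreatest_spec (P := fun s => b s (B - s) ≠ 0) hsBle hsBne
        have hs0le : s0 ≤ B := Nat.findGreatest_le B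
        have hs0max : ∀ s, s0 < s → b s (B - s) = 0 := by
          intro s hsgt
          rcases Nat.lt_or_ge B s with h | h
          · exact hbB s (B - s) (by omega)
          · by_contra hc; exact (Nat.findGreatest_is_greatest hsgt h) hc
        have htopC := cMul_top ha hbB hk0le hs0le hk0max hs0max
        have hzero := hab (k0 + s0) (d + 1 - k0 + (B - s0)) (by omega)
        rw [htopC] at hzero
        exact (mul_ne_zero hk0spec hs0spec) hzero
      rw [cMul_const hb0 a]
      funext r
      simp only [Pi.zero_apply]
      rw [polyCol_apply]
      have hrow := congrFun h0 r
      rw [polyCol_apply] at hrow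
      simp only [Pi.zero_apply] at hrow
      have : ∑ ij ∈ TT (d + 1), a ij.1 ij.2 * b 0 0 * nu n m p q β (r.1.1 + ij.1) (r.1.2 + ij.2)
          = b 0 0 * ∑ ij ∈ TT (d + 1), a ij.1 ij.2 * nu n m p q β (r.1.1 + ij.1) (r.1.2 + ij.2) := by
        rw [Finset.mul_sum]
        exact Finset.sum_congr rfl fun ab _ => by ring
      rw [this, hrow, mul_zero]

end Exist

/-- If `M_d(β)` is positive semidefinite and its column relations are
generated entirely by `X^n = p(X,Y)` and `Y^m = q(X,Y)` via recursiveness and linearity,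
then `M_d(β)` admits a unique RG extension `M_{d+1}`, and in its columns the relations
`X^{n+i}Y^{d+1-n-i} = (x^i y^{d+1-n-i} p)(X,Y)` and
`X^{d+1-m-g}Y^{m+g} = (x^{d+1-m-g} y^g q)(X,Y)` all hold. -/
theorem statement0 (d n m : ℕ) (hd : 1 ≤ d) (β p q : ℕ → ℕ → ℝ)
    (hpsd : (momentMatrix d β).PosSemidef)
    (hgen : GeneratedBy d n m β p q) :
    (∃ β' : ℕ → ℕ → ℝ,
      RGExtension d β β' ∧
      (∀ i : ℕ, i ≤ d + 1 - n →
        polyCol (d + 1) β' (shiftC i (d + 1 - n - i) (monoC n 0 - p)) = 0) ∧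
      (∀ g : ℕ, g ≤ d + 1 - m →
        polyCol (d + 1) β' (shiftC (d + 1 - m - g) g (monoC 0 m - q)) = 0)) ∧
    (∀ β₁ β₂ : ℕ → ℕ → ℝ, RGExtension d β β₁ → RGExtension d β β₂ →
      ∀ i j : ℕ, i + j ≤ 2 * d + 2 → β₁ i j = β₂ i j) := by
  obtain ⟨hn, hnd, hm, hmd, hp, hq, hq0, hP0, hQ0, hker⟩ := hgen
  obtain ⟨hrg, CLP, CLQ⟩ := rg_exists hn hm hnd hmd hp hq hq0 hker
  constructor
  · exact ⟨nu n m p q β, hrg,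
      fun i hi => CLP i (d + 1 - n - i) (by omega),
      fun g hg => CLQ (d + 1 - m - g) g (by omega)⟩
  · intro β₁ β₂ h₁ h₂
    exact rg_unique hn hm hnd hmd hp hq hq0 hP0 hQ0 β₁ β₂ h₁ h₂
end
end

section
/- Let d ≥ 1 and suppose M_d(β) is positive semidefinite, recursively generated, and its column relations are generated entirely by X^n = p(X,Y) and Y^m = q(X,Y) via recursiveness and linearity. Then there exists a unique real matrix B(d+1), with rows indexed by the monomials of degree ≤ d and columns indexed by the monomials of degree d+1, such that: (a) for every row index (i,j) with i+j ≤ d−1 and every column index (k,l) with k+l = d+1, the ((i,j),(k,l)) entry of B(d+1) equals β_{i+k,j+l}; (b) the block of B(d+1) with rows of degree d is Hankel, i.e., its entries depend only on i+k and j+l; (c) the columns of the augmented matrix (M_d B(d+1)) satisfy every relation (x^a y^b (x^n − p))(X,Y) = 0 and (x^a y^b (y^m − q))(X,Y) = 0 of degree ≤ d+1, and (M_d B(d+1)) is recursively generated for polynomials of degree ≤ d+1; and (d) the column space of B(d+1) is contained in the column space of M_d. -/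
open Finset Matrix

noncomputable section

/-- The `(row (k,l), column (i,j))` entry of the augmented matrix `(M_d  B(d+1))`,
where rows have degree ≤ d and columns degree ≤ d+1 (value 0 outside this range). -/
def augEntry (d : ℕ) (β : ℕ → ℕ → ℝ) (B : Matrix (Idx d) (Jdx (d + 1)) ℝ)
    (k l i j : ℕ) : ℝ :=
  if hr : k + l ≤ d then
    if i + j ≤ d then β (k + i) (l + j)
    else if hc : i + j = d + 1 then B ⟨(k, l), hr⟩ ⟨(i, j), hc⟩
    else 0
  else 0

/-- The column relation `w(X,Y) = 0` holds among the columns of `(M_d  B(d+1))`. -/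
def AugRel (d : ℕ) (β : ℕ → ℕ → ℝ) (B : Matrix (Idx d) (Jdx (d + 1)) ℝ)
    (w : ℕ → ℕ → ℝ) : Prop :=
  ∀ k l : ℕ, k + l ≤ d →
    ∑ c : Idx (d + 1), w c.1.1 c.1.2 * augEntry d β B k l c.1.1 c.1.2 = 0

/-- `(M_d  B(d+1))` is recursively generated for polynomials of degree ≤ d+1. -/
def AugRecGen (d : ℕ) (β : ℕ → ℕ → ℝ) (B : Matrix (Idx d) (Jdx (d + 1)) ℝ) : Prop :=
  ∀ a b : ℕ → ℕ → ℝ, DegLE a (d + 1) → DegLE b (d + 1) → DegLE (cMul a b) (d + 1) →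
    AugRel d β B a → AugRel d β B (cMul a b)

namespace St1
open Finset

/-! ### Generic sum lemmas -/

lemma sum_if_const {c : Prop} [Decidable c] (R : ℕ) (f : ℕ → ℝ) :
    ∑ v ∈ range R, (if c then f v else 0) = if c then ∑ v ∈ range R, f v else 0 := by
  split_ifs <;> simp

lemma sum1d0 (R A : ℕ) (F : ℕ → ℝ) (hF : ∀ u, R ≤ A + u → F u = 0) :
    ∑ u ∈ range R, (if A ≤ u then F (u - A) else 0) = ∑ u ∈ range R, F u := by
  have h1 : ∑ u ∈ range R, (if A ≤ u then F (u - A) else 0)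
      = ∑ u ∈ Finset.Ico A R, (if A ≤ u then F (u - A) else 0) := by
    refine (Finset.sum_subset ?_ ?_).symm
    · intro x hx; rw [Finset.mem_Ico] at hx; exact Finset.mem_range.mpr hx.2
    · intro x hx hx'; rw [Finset.mem_range] at hx; rw [Finset.mem_Ico] at hx'
      rw [if_neg]; omega
  rw [h1]
  have h2 : ∑ u ∈ Finset.Ico A R, (if A ≤ u then F (u - A) else 0)
      = ∑ u ∈ Finset.Ico A R, F (u - A) := by
    refine Finset.sum_congr rfl fun x hx => ?_
    rw [Finset.mem_Ico] at hx; rw [if_pos hx.1]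
  rw [h2, Finset.sum_Ico_eq_sum_range]
  have h3 : ∀ u, A + u - A = u := fun u => by omega
  simp only [h3]
  refine Finset.sum_subset ?_ fun x hx hx' => ?_
  · intro x hx; rw [Finset.mem_range] at *; omega
  · rw [Finset.mem_range] at hx hx'; exact hF x (by omega)

lemma sum1d (R A : ℕ) (g h : ℕ → ℝ) (hg : ∀ u, R ≤ A + u → g u = 0) :
    ∑ u ∈ range R, (if A ≤ u then g (u - A) else 0) * h u
      = ∑ u ∈ range R, g u * h (A + u) := by
  have step : ∀ u, (if A ≤ u then g (u - A) else 0) * h u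
      = (if A ≤ u then (fun x => g x * h (A + x)) (u - A) else 0) := by
    intro u
    split_ifs with hA
    · show g (u - A) * h u = g (u - A) * h (A + (u - A))
      rw [Nat.add_sub_cancel' hA]
    · rw [zero_mul]
  simp only [step]
  exact sum1d0 R A (fun x => g x * h (A + x)) fun u hu => by show g u * h (A + u) = 0; rw [hg u hu, zero_mul]

lemma extendBox (r₀ R : ℕ) (hle : r₀ ≤ R) (g : ℕ → ℕ → ℝ)
    (hg : ∀ u v, r₀ ≤ u ∨ r₀ ≤ v → g u v = 0) :
    ∑ u ∈ range r₀, ∑ v ∈ range r₀, g u v = ∑ u ∈ range R, ∑ v ∈ range R, g u v := by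
  have inner : ∀ u, ∑ v ∈ range r₀, g u v = ∑ v ∈ range R, g u v := by
    intro u
    refine Finset.sum_subset (Finset.range_subset_range.mpr hle) fun x hx hx' => ?_
    rw [Finset.mem_range] at hx'
    exact hg u x (Or.inr (by omega))
  simp only [inner]
  refine Finset.sum_subset (Finset.range_subset_range.mpr hle) fun x hx hx' => ?_
  rw [Finset.mem_range] at hx'
  exact Finset.sum_eq_zero fun v _ => hg x v (Or.inl (by omega))

lemma idxSum (D : ℕ) (f : ℕ → ℕ → ℝ) :
    ∑ c : Idx D, f c.1.1 c.1.2
      = ∑ u ∈ range (D+1), ∑ v ∈ range (D+1), (if u + v ≤ D then f u v else 0) := by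
  rw [← Finset.sum_subtype
      ((Finset.range (D + 1) ×ˢ Finset.range (D + 1)).filter fun ij => ij.1 + ij.2 ≤ D)
      (fun x => by
        simp only [Finset.mem_filter, Finset.mem_product, Finset.mem_range]
        constructor
        · rintro ⟨_, h⟩; exact h
        · intro h; refine ⟨⟨?_, ?_⟩, h⟩ <;> omega)
      (fun ij => f ij.1 ij.2)]
  rw [Finset.sum_filter, Finset.sum_product]

lemma swap4 (s t : Finset ℕ) (F : ℕ → ℕ → ℕ → ℕ → ℝ) :
    ∑ x ∈ s, ∑ y ∈ s, ∑ u ∈ t, ∑ v ∈ t, F x y u v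
      = ∑ u ∈ t, ∑ v ∈ t, ∑ x ∈ s, ∑ y ∈ s, F x y u v := by
  have h1 : ∑ x ∈ s, ∑ y ∈ s, ∑ u ∈ t, ∑ v ∈ t, F x y u v
      = ∑ x ∈ s, ∑ u ∈ t, ∑ y ∈ s, ∑ v ∈ t, F x y u v :=
    Finset.sum_congr rfl fun x _ => Finset.sum_comm
  have h2 : ∑ x ∈ s, ∑ u ∈ t, ∑ y ∈ s, ∑ v ∈ t, F x y u v
      = ∑ u ∈ t, ∑ x ∈ s, ∑ y ∈ s, ∑ v ∈ t, F x y u v := Finset.sum_comm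
  have h3 : ∑ u ∈ t, ∑ x ∈ s, ∑ y ∈ s, ∑ v ∈ t, F x y u v
      = ∑ u ∈ t, ∑ x ∈ s, ∑ v ∈ t, ∑ y ∈ s, F x y u v :=
    Finset.sum_congr rfl fun u _ => Finset.sum_congr rfl fun x _ => Finset.sum_comm
  have h4 : ∑ u ∈ t, ∑ x ∈ s, ∑ v ∈ t, ∑ y ∈ s, F x y u v
      = ∑ u ∈ t, ∑ v ∈ t, ∑ x ∈ s, ∑ y ∈ s, F x y u v :=
    Finset.sum_congr rfl fun u _ => Finset.sum_comm
  rw [h1, h2, h3, h4]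

end St1

namespace St1
open Finset

/-! ### Coefficient-function lemmas -/

lemma degLE_mono {a : ℕ → ℕ → ℝ} {D D' : ℕ} (h : DegLE a D) (hDD : D ≤ D') : DegLE a D' :=
  fun k l hk => h k l (by omega)

lemma degLE_shiftC {a : ℕ → ℕ → ℝ} {D : ℕ} (h : DegLE a D) (A B : ℕ) :
    DegLE (shiftC A B a) (A + B + D) := by
  intro k l hk
  unfold shiftC
  split_ifs with hc
  · exact h _ _ (by omega)
  · rfl

lemma degLE_r1 {n : ℕ} {p : ℕ → ℕ → ℝ} (hp : DegLE p (n - 1)) :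
    DegLE (monoC n 0 - p) n := by
  intro k l hk
  have h1 : monoC n 0 k l = 0 := by
    unfold monoC; rw [if_neg]; rintro ⟨rfl, rfl⟩; omega
  have h2 : p k l = 0 := hp k l (by omega)
  simp [h1, h2]

lemma degLE_r2 {m : ℕ} {q : ℕ → ℕ → ℝ} (hq : DegLE q m) :
    DegLE (monoC 0 m - q) m := by
  intro k l hk
  have h1 : monoC 0 m k l = 0 := by
    unfold monoC; rw [if_neg]; rintro ⟨rfl, rfl⟩; omega
  have h2 : q k l = 0 := hq k l (by omega)
  simp [h1, h2]

lemma shiftC_zero (a : ℕ → ℕ → ℝ) : shiftC 0 0 a = a := by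
  funext k l; unfold shiftC; simp

lemma shiftC_shiftC (A B A' B' : ℕ) (a : ℕ → ℕ → ℝ) :
    shiftC A B (shiftC A' B' a) = shiftC (A + A') (B + B') a := by
  funext k l
  unfold shiftC
  split_ifs with h1 h2 h3 h4 <;> first | rfl | (congr 1 <;> omega) | (exfalso; omega)

lemma shiftC_sub (A B : ℕ) (a b : ℕ → ℕ → ℝ) :
    shiftC A B (a - b) = shiftC A B a - shiftC A B b := by
  funext k l
  unfold shiftC
  simp only [Pi.sub_apply]
  split_ifs <;> simp

lemma shiftC_monoC (A B u v : ℕ) : shiftC A B (monoC u v) = monoC (A + u) (B + v) := by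
  funext k l
  unfold shiftC monoC
  split_ifs with h1 h2 h3 h3 <;> first | rfl | omega

/-! ### The `SS` pairing -/

/-- `∑_{u,v < R} w u v * f u v`. -/
def SS (R : ℕ) (f w : ℕ → ℕ → ℝ) : ℝ := ∑ u ∈ range R, ∑ v ∈ range R, w u v * f u v

lemma SS_sub (R : ℕ) (f w₁ w₂ : ℕ → ℕ → ℝ) : SS R f (w₁ - w₂) = SS R f w₁ - SS R f w₂ := by
  unfold SS
  simp [sub_mul, Finset.sum_sub_distrib]

lemma SS_monoC (R a b : ℕ) (f : ℕ → ℕ → ℝ) (ha : a < R) (hb : b < R) :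
    SS R f (monoC a b) = f a b := by
  unfold SS monoC
  have st : ∀ u v, (if u = a ∧ v = b then (1:ℝ) else 0) * f u v
      = if u = a then (if v = b then f u v else 0) else 0 := by
    intro u v; by_cases h1 : u = a <;> by_cases h2 : v = b <;> simp [h1, h2]
  simp only [st, sum_if_const]
  rw [Finset.sum_ite_eq' (range R) a, if_pos (Finset.mem_range.mpr ha),
    Finset.sum_ite_eq' (range R) b, if_pos (Finset.mem_range.mpr hb)]

lemma SS_congrW (R D : ℕ) (f g w : ℕ → ℕ → ℝ) (h : ∀ u v, w u v ≠ 0 → f u v = g u v) :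
    SS R f w = SS R g w := by
  unfold SS
  refine Finset.sum_congr rfl fun u _ => Finset.sum_congr rfl fun v _ => ?_
  by_cases hw : w u v = 0
  · rw [hw, zero_mul, zero_mul]
  · rw [h u v hw]

/-- The key shift/reindex lemma. -/
lemma shiftSS (R A B D : ℕ) (f w : ℕ → ℕ → ℝ) (hw : DegLE w D) (h : A + B + D < R) :
    SS R f (shiftC A B w) = SS R (fun u v => f (A + u) (B + v)) w := by
  unfold SS shiftC
  have step1 : ∀ u v, (if A ≤ u ∧ B ≤ v then w (u - A) (v - B) else 0) * f u v
      = if A ≤ u then ((if B ≤ v then w (u - A) (v - B) else 0) * f u v) else 0 := by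
    intro u v
    by_cases h1 : A ≤ u <;> by_cases h2 : B ≤ v <;> simp [h1, h2]
  simp only [step1]
  have step2 : ∀ u, ∑ v ∈ range R, (if A ≤ u then ((if B ≤ v then w (u - A) (v - B) else 0) * f u v) else 0)
      = if A ≤ u then (∑ v ∈ range R, (if B ≤ v then w (u - A) (v - B) else 0) * f u v) else 0 := by
    intro u
    exact sum_if_const R _
  simp only [step2]
  have step3 : ∀ u, A ≤ u → ∑ v ∈ range R, (if B ≤ v then w (u - A) (v - B) else 0) * f u v
      = ∑ v ∈ range R, w (u - A) v * f u (B + v) := by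
    intro u hu
    exact sum1d R B (w (u - A)) (f u) fun v hv => hw _ v (by omega)
  have step4 : ∀ u, (if A ≤ u then (∑ v ∈ range R, (if B ≤ v then w (u - A) (v - B) else 0) * f u v) else 0)
      = if A ≤ u then ((fun x => ∑ v ∈ range R, w x v * f (A + x) (B + v)) (u - A)) else 0 := by
    intro u
    split_ifs with hA
    · rw [step3 u hA]
      have : u = A + (u - A) := by omega
      rw [this]
      simp only [Nat.add_sub_cancel_left]
    · rfl
  simp only [step4]
  rw [sum1d0 R A (fun x => ∑ v ∈ range R, w x v * f (A + x) (B + v))]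
  intro u hu
  refine Finset.sum_eq_zero fun v _ => ?_
  rw [hw u v (by omega), zero_mul]

end St1

namespace St1
open Finset

/-! ### The new moments -/

/-- Candidate value of the degree-`2d+1` moment `β_{s-n+·, 2d+1-s+·}` paired with `p`. -/
def Pf (d n : ℕ) (β p : ℕ → ℕ → ℝ) (s : ℕ) : ℝ :=
  ∑ u ∈ range n, ∑ v ∈ range n, p u v * β (s - n + u) (2*d+1-s+v)

/-- The new moments `γ_s = β_{s, 2d+1-s}` of degree `2d+1`, defined via the relations. -/
def gam (d n m : ℕ) (β p q : ℕ → ℕ → ℝ) : ℕ → ℝ := fun s =>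
  if n ≤ s then Pf d n β p s
  else (∑ u ∈ range m, ∑ v ∈ range m,
          (if u + v + 1 ≤ m then q u v * β (s+u) (2*d+1-m-s+v) else 0))
    + ∑ u ∈ (Finset.Icc 1 m).attach, q u.1 (m - u.1) * gam d n m β p q (s + u.1)
termination_by s => n - s
decreasing_by
  have := u.2
  rw [Finset.mem_Icc] at this
  omega

/-- The (provisional) extended moment function: old moments up to degree `2d`,
new moments in degree `2d+1`. -/
def mu (d n m : ℕ) (β p q : ℕ → ℕ → ℝ) (a b : ℕ) : ℝ :=
  if a + b ≤ 2*d then β a b else if a + b = 2*d+1 then gam d n m β p q a else 0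

section Main

variable (d n m : ℕ) (β p q : ℕ → ℕ → ℝ)

lemma mu_low {a b : ℕ} (h : a + b ≤ 2*d) : mu d n m β p q a b = β a b := if_pos h

lemma mu_top {a b : ℕ} (h : a + b = 2*d+1) : mu d n m β p q a b = gam d n m β p q a := by
  unfold mu
  rw [if_neg (by omega), if_pos h]

lemma gam_high {s : ℕ} (h : n ≤ s) : gam d n m β p q s = Pf d n β p s := by
  rw [gam, if_pos h]

lemma gam_low {s : ℕ} (h : s < n) :
    gam d n m β p q s
      = (∑ u ∈ range m, ∑ v ∈ range m,
          (if u + v + 1 ≤ m then q u v * β (s+u) (2*d+1-m-s+v) else 0))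
        + ∑ u ∈ Finset.Icc 1 m, q u (m - u) * gam d n m β p q (s + u) := by
  rw [gam, if_neg (by omega)]
  congr 1
  exact Finset.sum_attach (Finset.Icc 1 m) (fun u => q u (m - u) * gam d n m β p q (s + u))

/-- The pairing `∑ w_{uv} μ(K+u, L+v)`. -/
def PP (K L : ℕ) (w : ℕ → ℕ → ℝ) : ℝ :=
  SS (d+2) (fun u v => mu d n m β p q (K+u) (L+v)) w

lemma PP_shift {D : ℕ} (K L A B : ℕ) (w : ℕ → ℕ → ℝ) (hw : DegLE w D)
    (h : A + B + D ≤ d + 1) :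
    PP d n m β p q K L (shiftC A B w) = PP d n m β p q (K+A) (L+B) w := by
  unfold PP
  rw [shiftSS (d+2) A B D _ w hw (by omega)]
  have : (fun u v => mu d n m β p q (K+(A+u)) (L+(B+v)))
      = fun u v => mu d n m β p q ((K+A)+u) ((L+B)+v) := by
    funext u v; congr 1 <;> omega
  rw [this]

lemma PP_zero' (K L : ℕ) (w : ℕ → ℕ → ℝ) (hw : ∀ u v, w u v = 0) :
    PP d n m β p q K L w = 0 := by
  unfold PP SS
  refine Finset.sum_eq_zero fun u _ => Finset.sum_eq_zero fun v _ => ?_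
  rw [hw u v, zero_mul]

lemma PP_add (K L : ℕ) (w₁ w₂ : ℕ → ℕ → ℝ) :
    PP d n m β p q K L (w₁ + w₂) = PP d n m β p q K L w₁ + PP d n m β p q K L w₂ := by
  unfold PP SS
  simp [add_mul, Finset.sum_add_distrib]

lemma PP_smul (K L : ℕ) (c : ℝ) (w : ℕ → ℕ → ℝ) :
    PP d n m β p q K L (c • w) = c * PP d n m β p q K L w := by
  unfold PP SS
  simp [Finset.mul_sum, mul_assoc]

end Main
end St1

namespace St1
open Finset

section Main

variable (d n m : ℕ) (β p q : ℕ → ℕ → ℝ)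

lemma polyColS (a : ℕ → ℕ → ℝ) (ha : DegLE a d) (k l : ℕ) (h : k + l ≤ d) :
    polyCol d β a ⟨(k,l), h⟩ = SS (d+2) (fun u v => β (k+u) (l+v)) a := by
  have e1 : polyCol d β a ⟨(k,l), h⟩
      = ∑ c : Idx d, β (k + c.1.1) (l + c.1.2) * a c.1.1 c.1.2 := rfl
  rw [e1, idxSum d (fun u v => β (k+u) (l+v) * a u v)]
  have e2 : ∀ u v, (if u + v ≤ d then β (k+u) (l+v) * a u v else 0)
      = a u v * β (k+u) (l+v) := by
    intro u v; split_ifs with hc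
    · ring
    · rw [ha u v (by omega), zero_mul]
  simp only [e2]
  exact extendBox (d+1) (d+2) (by omega) _
    (fun u v huv => by rw [ha u v (by omega), zero_mul])

lemma lemK1 (hn1 : 1 ≤ n) (hnd : n ≤ d) (hp : DegLE p (n-1))
    (hker : ∀ A B, n + A + B ≤ d → polyCol d β (shiftC A B (monoC n 0 - p)) = 0)
    (A B : ℕ) (hAB : A + B + n ≤ 2*d) :
    SS (d+2) (fun u v => β (A+u) (B+v)) (monoC n 0 - p) = 0 := by
  obtain ⟨A1, B1, hA1, hB1, hle1, hle2⟩ :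
      ∃ A1 B1, A1 ≤ A ∧ B1 ≤ B ∧ A1 + B1 + n ≤ d ∧ (A - A1) + (B - B1) ≤ d :=
    ⟨min A (d-n), min B (d-n-min A (d-n)), by omega, by omega, by omega, by omega⟩
  have hr1 : DegLE (monoC n 0 - p) n := degLE_r1 hp
  have e0 : (fun u v => β (A+u) (B+v))
      = fun u v => β ((A-A1) + (A1+u)) ((B-B1) + (B1+v)) := by
    funext u v; congr 1 <;> omega
  rw [e0]
  have hs := shiftSS (d+2) A1 B1 n (fun x y => β ((A-A1)+x) ((B-B1)+y))
    (monoC n 0 - p) hr1 (by omega)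
  beta_reduce at hs
  rw [← hs,
    ← polyColS d β (shiftC A1 B1 (monoC n 0 - p))
      (degLE_mono (degLE_shiftC hr1 A1 B1) (by omega)) (A-A1) (B-B1) hle2,
    hker A1 B1 (by omega)]
  rfl

lemma lemK2 (hm1 : 1 ≤ m) (hmd : m ≤ d) (hq : DegLE q m)
    (hker : ∀ A B, m + A + B ≤ d → polyCol d β (shiftC A B (monoC 0 m - q)) = 0)
    (A B : ℕ) (hAB : A + B + m ≤ 2*d) :
    SS (d+2) (fun u v => β (A+u) (B+v)) (monoC 0 m - q) = 0 := by
  obtain ⟨A1, B1, hA1, hB1, hle1, hle2⟩ :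
      ∃ A1 B1, A1 ≤ A ∧ B1 ≤ B ∧ A1 + B1 + m ≤ d ∧ (A - A1) + (B - B1) ≤ d :=
    ⟨min A (d-m), min B (d-m-min A (d-m)), by omega, by omega, by omega, by omega⟩
  have hr2 : DegLE (monoC 0 m - q) m := degLE_r2 hq
  have e0 : (fun u v => β (A+u) (B+v))
      = fun u v => β ((A-A1) + (A1+u)) ((B-B1) + (B1+v)) := by
    funext u v; congr 1 <;> omega
  rw [e0]
  have hs := shiftSS (d+2) A1 B1 m (fun x y => β ((A-A1)+x) ((B-B1)+y))
    (monoC 0 m - q) hr2 (by omega)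
  beta_reduce at hs
  rw [← hs,
    ← polyColS d β (shiftC A1 B1 (monoC 0 m - q))
      (degLE_mono (degLE_shiftC hr2 A1 B1) (by omega)) (A-A1) (B-B1) hle2,
    hker A1 B1 (by omega)]
  rfl

lemma beta1 (hn1 : 1 ≤ n) (hnd : n ≤ d) (hp : DegLE p (n-1))
    (hker : ∀ A B, n + A + B ≤ d → polyCol d β (shiftC A B (monoC n 0 - p)) = 0)
    (A B : ℕ) (h : A + B + n ≤ 2*d) :
    β (A+n) B = SS (d+2) (fun u v => β (A+u) (B+v)) p := by
  have h0 := lemK1 d n β p hn1 hnd hp hker A B h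
  rw [SS_sub, SS_monoC (d+2) n 0 _ (by omega) (by omega)] at h0
  have : β (A+n) (B+0) = β (A+n) B := by norm_num
  rw [this] at h0
  linarith

lemma beta2 (hm1 : 1 ≤ m) (hmd : m ≤ d) (hq : DegLE q m)
    (hker : ∀ A B, m + A + B ≤ d → polyCol d β (shiftC A B (monoC 0 m - q)) = 0)
    (A B : ℕ) (h : A + B + m ≤ 2*d) :
    β A (B+m) = SS (d+2) (fun u v => β (A+u) (B+v)) q := by
  have h0 := lemK2 d m β q hm1 hmd hq hker A B h
  rw [SS_sub, SS_monoC (d+2) 0 m _ (by omega) (by omega)] at h0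
  have : β (A+0) (B+m) = β A (B+m) := by norm_num
  rw [this] at h0
  linarith

lemma pfSS (hn1 : 1 ≤ n) (hnd : n ≤ d) (hp : DegLE p (n-1)) (s L : ℕ)
    (hs : n ≤ s) (hsL : s + L = 2*d+1) :
    Pf d n β p s = SS (d+2) (fun a b => β ((s-n)+a) (L+b)) p := by
  unfold Pf SS
  have hL : 2*d+1-s = L := by omega
  rw [hL]
  exact extendBox n (d+2) (by omega) _
    (fun u v huv => by rw [hp u v (by omega), zero_mul])

lemma phi (hn1 : 1 ≤ n) (hnd : n ≤ d) (hp : DegLE p (n-1))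
    (hker : ∀ A B, n + A + B ≤ d → polyCol d β (shiftC A B (monoC n 0 - p)) = 0)
    (K L : ℕ) (h : K + L + n ≤ 2*d+1) :
    PP d n m β p q K L (monoC n 0 - p) = 0 := by
  by_cases hc : K + L + n ≤ 2*d
  · -- all moments involved are old moments
    unfold PP
    rw [SS_congrW (d+2) 0 _ (fun u v => β (K+u) (L+v)) _ (fun u v hne => ?_)]
    · exact lemK1 d n β p hn1 hnd hp hker K L hc
    · have hr1 : DegLE (monoC n 0 - p) n := degLE_r1 hp
      have huv : u + v ≤ n := by
        by_contra hco; exact hne (hr1 u v (by omega))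
      exact mu_low d n m β p q (by omega)
  · -- the top case
    have htop : K + L + n = 2*d+1 := by omega
    unfold PP
    rw [SS_sub, SS_monoC (d+2) n 0 _ (by omega) (by omega),
      mu_top d n m β p q (by omega : (K+n)+(L+0) = 2*d+1),
      gam_high d n m β p q (by omega : n ≤ K+n),
      pfSS d n β p hn1 hnd hp (K+n) L (by omega) (by omega)]
    have e1 : (fun a b => β ((K+n-n)+a) (L+b)) = fun a b => β (K+a) (L+b) := by
      funext a b; congr 2; omega
    rw [e1, sub_eq_zero]
    refine (SS_congrW (d+2) 0 _ _ p (fun u v hne => ?_)).symm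
    have huv : u + v ≤ n - 1 := by
      by_contra hco; exact hne (hp u v (by omega))
    exact mu_low d n m β p q (by omega)

end Main
end St1

namespace St1
open Finset

section Main

variable (d n m : ℕ) (β p q : ℕ → ℕ → ℝ)

lemma ssMuQ (hq : DegLE q m) (hm1 : 1 ≤ m) (K L : ℕ) (hKL : K + L + m = 2*d+1) :
    SS (d+2) (fun u v => mu d n m β p q (K+u) (L+v)) q
      = (∑ u ∈ range (d+2), ∑ v ∈ range (d+2),
          (if u+v+1 ≤ m then q u v * β (K+u) (L+v) else 0))
        + (∑ u ∈ range (d+2), ∑ v ∈ range (d+2),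
          (if u+v = m then q u v * gam d n m β p q (K+u) else 0)) := by
  unfold SS
  beta_reduce
  rw [← Finset.sum_add_distrib]
  refine Finset.sum_congr rfl fun u _ => ?_
  rw [← Finset.sum_add_distrib]
  refine Finset.sum_congr rfl fun v _ => ?_
  by_cases h1 : u + v + 1 ≤ m
  · rw [if_pos h1, if_neg (by omega), add_zero, mu_low d n m β p q (by omega)]
  · by_cases h2 : u + v = m
    · rw [if_neg h1, if_pos h2, zero_add, mu_top d n m β p q (by omega)]
    · rw [if_neg h1, if_neg h2, hq u v (by omega)]
      simp

lemma qgIcc (hq0 : q 0 m = 0) (hmd : m ≤ d) (K : ℕ) :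
    (∑ u ∈ range (d+2), ∑ v ∈ range (d+2),
        (if u+v = m then q u v * gam d n m β p q (K+u) else 0))
      = ∑ u ∈ Finset.Icc 1 m, q u (m-u) * gam d n m β p q (K+u) := by
  have inner : ∀ u, ∑ v ∈ range (d+2), (if u+v = m then q u v * gam d n m β p q (K+u) else 0)
      = if u ≤ m then q u (m-u) * gam d n m β p q (K+u) else 0 := by
    intro u
    have st : ∀ v, (if u+v = m then q u v * gam d n m β p q (K+u) else 0)
        = if v = m - u then (if u ≤ m then q u v * gam d n m β p q (K+u) else 0) else 0 := by
      intro v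
      split_ifs with h1 h2 h3 <;> first | rfl | omega | (exfalso; omega)
    simp only [st]
    rw [Finset.sum_ite_eq' (range (d+2)) (m-u), if_pos (Finset.mem_range.mpr (by omega))]
  simp only [inner]
  have hsub : Finset.Icc 1 m ⊆ range (d+2) := fun x hx => by
    rw [Finset.mem_Icc] at hx; exact Finset.mem_range.mpr (by omega)
  rw [← Finset.sum_subset hsub (fun x hx hx' => ?_)]
  · refine Finset.sum_congr rfl fun u hu => ?_
    rw [Finset.mem_Icc] at hu
    rw [if_pos hu.2]
  · rw [Finset.mem_Icc] at hx'
    by_cases hxm : x ≤ m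
    · have hx0 : x = 0 := by omega
      subst hx0
      rw [if_pos hxm]
      simp [hq0]
    · rw [if_neg hxm]

lemma starLow (hmd : m ≤ d) (K L : ℕ) (hK : K < n) (hKL : K + L + m = 2*d+1) :
    gam d n m β p q K
      = (∑ u ∈ range (d+2), ∑ v ∈ range (d+2),
          (if u+v+1 ≤ m then q u v * β (K+u) (L+v) else 0))
        + ∑ u ∈ Finset.Icc 1 m, q u (m-u) * gam d n m β p q (K+u) := by
  rw [gam_low d n m β p q hK]
  congr 1
  have hL : 2*d+1-m-K = L := by omega
  rw [hL]
  exact extendBox m (d+2) (by omega) _ (fun u v huv => by rw [if_neg (by omega)])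

lemma starHigh
    (hn1 : 1 ≤ n) (hnd : n ≤ d) (hm1 : 1 ≤ m) (hmd : m ≤ d)
    (hp : DegLE p (n-1)) (hq : DegLE q m)
    (hker1 : ∀ A B, n + A + B ≤ d → polyCol d β (shiftC A B (monoC n 0 - p)) = 0)
    (hker2 : ∀ A B, m + A + B ≤ d → polyCol d β (shiftC A B (monoC 0 m - q)) = 0)
    (K L : ℕ) (hK : n ≤ K) (hKL : K + L + m = 2*d+1) :
    gam d n m β p q K
      = (∑ u ∈ range (d+2), ∑ v ∈ range (d+2),
          (if u+v+1 ≤ m then q u v * β (K+u) (L+v) else 0))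
        + (∑ u ∈ range (d+2), ∑ v ∈ range (d+2),
          (if u+v = m then q u v * gam d n m β p q (K+u) else 0)) := by
  set SSp : ℕ → ℕ → ℝ :=
    fun u v => SS (d+2) (fun a b => β ((K-n+u)+a) ((L+v)+b)) p with hSSp
  have stepA : ∀ u v, u+v+1 ≤ m → β (K+u) (L+v) = SSp u v := by
    intro u v huv
    have h1 := beta1 d n β p hn1 hnd hp hker1 (K-n+u) (L+v) (by omega)
    have h2 : K - n + u + n = K + u := by omega
    rw [h2] at h1
    exact h1
  have stepB : ∀ u v, u + v = m → gam d n m β p q (K+u) = SSp u v := by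
    intro u v huv
    rw [gam_high d n m β p q (by omega : n ≤ K+u),
      pfSS d n β p hn1 hnd hp (K+u) (L+v) (by omega) (by omega)]
    simp only [hSSp]
    congr 1
    funext a b
    congr 2
    omega
  have main :
      (∑ u ∈ range (d+2), ∑ v ∈ range (d+2),
          (if u+v+1 ≤ m then q u v * β (K+u) (L+v) else 0))
        + (∑ u ∈ range (d+2), ∑ v ∈ range (d+2),
          (if u+v = m then q u v * gam d n m β p q (K+u) else 0))
      = ∑ u ∈ range (d+2), ∑ v ∈ range (d+2), q u v * SSp u v := by
    rw [← Finset.sum_add_distrib]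
    refine Finset.sum_congr rfl fun u _ => ?_
    rw [← Finset.sum_add_distrib]
    refine Finset.sum_congr rfl fun v _ => ?_
    by_cases h1 : u+v+1 ≤ m
    · rw [if_pos h1, if_neg (by omega), add_zero, stepA u v h1]
    · by_cases h2 : u+v = m
      · rw [if_neg h1, if_pos h2, zero_add, stepB u v h2]
      · rw [if_neg h1, if_neg h2, hq u v (by omega)]
        simp
  have swap :
      ∑ u ∈ range (d+2), ∑ v ∈ range (d+2), q u v * SSp u v
        = ∑ a ∈ range (d+2), ∑ b ∈ range (d+2), p a b *
            SS (d+2) (fun x y => β ((K-n+a)+x) ((L+b)+y)) q := by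
    have e1 : ∀ u v, q u v * SSp u v
        = ∑ a ∈ range (d+2), ∑ b ∈ range (d+2),
            (q u v * (p a b * β ((K-n+u)+a) ((L+v)+b))) := by
      intro u v
      simp only [hSSp, SS]
      rw [Finset.mul_sum]
      refine Finset.sum_congr rfl fun a _ => ?_
      rw [Finset.mul_sum]
    simp only [e1]
    rw [swap4]
    refine Finset.sum_congr rfl fun a _ => Finset.sum_congr rfl fun b _ => ?_
    simp only [SS]
    rw [Finset.mul_sum]
    refine Finset.sum_congr rfl fun u _ => ?_
    rw [Finset.mul_sum]
    refine Finset.sum_congr rfl fun v _ => ?_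
    have e2 : (K-n+u)+a = (K-n+a)+u := by omega
    have e3 : (L+v)+b = (L+b)+v := by omega
    rw [e2, e3]; ring
  have final :
      ∑ a ∈ range (d+2), ∑ b ∈ range (d+2), p a b *
          SS (d+2) (fun x y => β ((K-n+a)+x) ((L+b)+y)) q
        = Pf d n β p K := by
    rw [pfSS d n β p hn1 hnd hp K (L+m) hK (by omega)]
    simp only [SS]
    refine Finset.sum_congr rfl fun a _ => Finset.sum_congr rfl fun b _ => ?_
    by_cases hpa : p a b = 0
    · simp [hpa]
    · have hab : a + b ≤ n - 1 := by
        by_contra hc; exact hpa (hp a b (by omega))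
      have h4 := beta2 d m β q hm1 hmd hq hker2 (K-n+a) (L+b) (by omega)
      simp only [SS] at h4
      rw [← h4]
      have e5 : L + b + m = L + m + b := by omega
      rw [e5]
  rw [gam_high d n m β p q hK, main, swap, final]

lemma psi (hn1 : 1 ≤ n) (hnd : n ≤ d) (hm1 : 1 ≤ m) (hmd : m ≤ d)
    (hp : DegLE p (n-1)) (hq : DegLE q m) (hq0 : q 0 m = 0)
    (hker1 : ∀ A B, n + A + B ≤ d → polyCol d β (shiftC A B (monoC n 0 - p)) = 0)
    (hker2 : ∀ A B, m + A + B ≤ d → polyCol d β (shiftC A B (monoC 0 m - q)) = 0)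
    (K L : ℕ) (h : K + L + m ≤ 2*d+1) :
    PP d n m β p q K L (monoC 0 m - q) = 0 := by
  by_cases hc : K + L + m ≤ 2*d
  · unfold PP
    rw [SS_congrW (d+2) 0 _ (fun u v => β (K+u) (L+v)) _ (fun u v hne => ?_)]
    · exact lemK2 d m β q hm1 hmd hq hker2 K L hc
    · have huv : u + v ≤ m := by
        by_contra hco; exact hne (degLE_r2 hq u v (by omega))
      exact mu_low d n m β p q (by omega)
  · have htop : K + L + m = 2*d+1 := by omega
    unfold PP
    rw [SS_sub, SS_monoC (d+2) 0 m _ (by omega) (by omega),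
      mu_top d n m β p q (by omega : (K+0)+(L+m) = 2*d+1),
      ssMuQ d n m β p q hq hm1 K L htop]
    have eK : K + 0 = K := rfl
    rw [eK]
    by_cases hKn : n ≤ K
    · rw [starHigh d n m β p q hn1 hnd hm1 hmd hp hq hker1 hker2 K L hKn htop]
      ring
    · rw [qgIcc d n m β p q hq0 hmd K,
        starLow d n m β p q hmd K L (by omega) htop]
      ring

end Main
end St1

namespace St1
open Finset

section Main

variable (d n m : ℕ) (β p q : ℕ → ℕ → ℝ)

/-- Extend a vector indexed by `Idx d` to a coefficient function. -/
def extF (v : Idx d → ℝ) : ℕ → ℕ → ℝ :=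
  fun a b => if h : a + b ≤ d then v ⟨(a,b), h⟩ else 0

lemma extF_degLE (v : Idx d → ℝ) : DegLE (extF d v) d := by
  intro k l hk
  unfold extF
  rw [dif_neg (by omega)]

lemma spanPP (hn1 : 1 ≤ n) (hnd : n ≤ d) (hm1 : 1 ≤ m) (hmd : m ≤ d)
    (hp : DegLE p (n-1)) (hq : DegLE q m) (hq0 : q 0 m = 0)
    (hker1 : ∀ A B, n + A + B ≤ d → polyCol d β (shiftC A B (monoC n 0 - p)) = 0)
    (hker2 : ∀ A B, m + A + B ≤ d → polyCol d β (shiftC A B (monoC 0 m - q)) = 0)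
    (hspan : ∀ v : Idx d → ℝ,
      momentMatrix d β *ᵥ v = 0 ↔
        v ∈ Submodule.span ℝ
          {w : Idx d → ℝ |
            (∃ i j : ℕ, n + i + j ≤ d ∧ w = coeffVec d (shiftC i j (monoC n 0 - p))) ∨
            (∃ k l : ℕ, m + k + l ≤ d ∧ w = coeffVec d (shiftC k l (monoC 0 m - q)))})
    (v : Idx d → ℝ) (hv : momentMatrix d β *ᵥ v = 0)
    (K L : ℕ) (hKL : K + L ≤ d + 1) :
    PP d n m β p q K L (extF d v) = 0 := by
  have hmem := (hspan v).mp hv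
  clear hv
  induction hmem using Submodule.span_induction with
  | mem x hx =>
    rcases hx with ⟨A, B, hAB, rfl⟩ | ⟨A, B, hAB, rfl⟩
    · have he : extF d (coeffVec d (shiftC A B (monoC n 0 - p))) = shiftC A B (monoC n 0 - p) := by
        funext a b
        unfold extF coeffVec
        split_ifs with h
        · rfl
        · exact (degLE_mono (degLE_shiftC (degLE_r1 hp) A B) (show A+B+n ≤ d by omega) a b (by omega)).symm
      rw [he, PP_shift d n m β p q (D := n) K L A B _ (degLE_r1 hp) (by omega)]
      exact phi d n m β p q hn1 hnd hp hker1 (K+A) (L+B) (by omega)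
    · have he : extF d (coeffVec d (shiftC A B (monoC 0 m - q))) = shiftC A B (monoC 0 m - q) := by
        funext a b
        unfold extF coeffVec
        split_ifs with h
        · rfl
        · exact (degLE_mono (degLE_shiftC (degLE_r2 hq) A B) (show A+B+m ≤ d by omega) a b (by omega)).symm
      rw [he, PP_shift d n m β p q (D := m) K L A B _ (degLE_r2 hq) (by omega)]
      exact psi d n m β p q hn1 hnd hm1 hmd hp hq hq0 hker1 hker2 (K+A) (L+B) (by omega)
  | zero =>
    refine PP_zero' d n m β p q K L _ fun a b => ?_
    unfold extF
    split_ifs <;> rfl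
  | add x y hx hy ihx ihy =>
    have he : extF d (x + y) = extF d x + extF d y := by
      funext a b
      unfold extF
      simp only [Pi.add_apply]
      split_ifs <;> simp
    rw [he, PP_add, ihx, ihy, add_zero]
  | smul c x hx ihx =>
    have he : extF d (c • x) = c • extF d x := by
      funext a b
      unfold extF
      simp only [Pi.smul_apply, smul_eq_mul]
      split_ifs <;> simp
    rw [he, PP_smul, ihx, mul_zero]

/-! ### Shifting kernel elements via recursive generation -/

lemma cMul_monoC10 (a : ℕ → ℕ → ℝ) : cMul a (monoC 1 0) = shiftC 1 0 a := by
  funext k l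
  unfold cMul monoC shiftC
  rcases Nat.eq_zero_or_pos k with hk | hk
  · subst hk
    rw [if_neg (by omega)]
    refine Finset.sum_eq_zero fun i hi => Finset.sum_eq_zero fun j hj => ?_
    rw [Finset.mem_range] at hi hj
    rw [if_neg (by omega), mul_zero]
  · have st : ∀ i ∈ range (k+1), ∀ j ∈ range (l+1),
        a i j * (if k - i = 1 ∧ l - j = 0 then (1:ℝ) else 0)
          = if i = k-1 then (if j = l then a i j else 0) else 0 := by
      intro i hi j hj
      rw [Finset.mem_range] at hi hj
      by_cases h1 : i = k-1 <;> by_cases h2 : j = l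
      · rw [if_pos (by omega), if_pos h1, if_pos h2, mul_one]
      · rw [if_neg (by omega), if_pos h1, if_neg h2, mul_zero]
      · rw [if_neg (by omega), if_neg h1, mul_zero]
      · rw [if_neg (by omega), if_neg h1, mul_zero]
    rw [Finset.sum_congr rfl (fun i hi => Finset.sum_congr rfl (fun j hj => st i hi j hj))]
    have h5 : ∀ i, ∑ j ∈ range (l+1), (if i = k-1 then (if j = l then a i j else 0) else 0)
        = if i = k-1 then a i l else 0 := by
      intro i
      rw [sum_if_const]
      split_ifs with h
      · rw [Finset.sum_ite_eq' (range (l+1)) l, if_pos (Finset.mem_range.mpr (by omega))]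
      · rfl
    simp only [h5]
    rw [Finset.sum_ite_eq' (range (k+1)) (k-1), if_pos (Finset.mem_range.mpr (by omega)),
      if_pos (show 1 ≤ k ∧ 0 ≤ l by omega), Nat.sub_zero]

lemma cMul_monoC01 (a : ℕ → ℕ → ℝ) : cMul a (monoC 0 1) = shiftC 0 1 a := by
  funext k l
  unfold cMul monoC shiftC
  rcases Nat.eq_zero_or_pos l with hl | hl
  · subst hl
    rw [if_neg (by omega)]
    refine Finset.sum_eq_zero fun i hi => Finset.sum_eq_zero fun j hj => ?_
    rw [Finset.mem_range] at hi hj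
    rw [if_neg (by omega), mul_zero]
  · have st : ∀ i ∈ range (k+1), ∀ j ∈ range (l+1),
        a i j * (if k - i = 0 ∧ l - j = 1 then (1:ℝ) else 0)
          = if i = k then (if j = l-1 then a i j else 0) else 0 := by
      intro i hi j hj
      rw [Finset.mem_range] at hi hj
      by_cases h1 : i = k <;> by_cases h2 : j = l-1
      · rw [if_pos (by omega), if_pos h1, if_pos h2, mul_one]
      · rw [if_neg (by omega), if_pos h1, if_neg h2, mul_zero]
      · rw [if_neg (by omega), if_neg h1, mul_zero]
      · rw [if_neg (by omega), if_neg h1, mul_zero]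
    rw [Finset.sum_congr rfl (fun i hi => Finset.sum_congr rfl (fun j hj => st i hi j hj))]
    have h5 : ∀ i, ∑ j ∈ range (l+1), (if i = k then (if j = l-1 then a i j else 0) else 0)
        = if i = k then a i (l-1) else 0 := by
      intro i
      rw [sum_if_const]
      split_ifs with h
      · rw [Finset.sum_ite_eq' (range (l+1)) (l-1), if_pos (Finset.mem_range.mpr (by omega))]
      · rfl
    simp only [h5]
    rw [Finset.sum_ite_eq' (range (k+1)) k, if_pos (Finset.mem_range.mpr (by omega)),
      if_pos (show 0 ≤ k ∧ 1 ≤ l by omega), Nat.sub_zero]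

lemma kerShift (hd : 1 ≤ d) (hrg : RecursivelyGenerated d β)
    (a : ℕ → ℕ → ℝ) (e : ℕ) (ha : DegLE a e) (h0 : polyCol d β a = 0) :
    ∀ A B, e + A + B ≤ d → polyCol d β (shiftC A B a) = 0 := by
  have stepX : ∀ (b : ℕ → ℕ → ℝ) (e' : ℕ), DegLE b e' → e' + 1 ≤ d →
      polyCol d β b = 0 → polyCol d β (shiftC 1 0 b) = 0 := by
    intro b e' hb he' hb0
    have := hrg b (monoC 1 0) (degLE_mono hb (by omega))
      (fun k l hkl => by unfold monoC; rw [if_neg]; rintro ⟨rfl, rfl⟩; omega)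
      (by rw [cMul_monoC10]; exact degLE_mono (degLE_shiftC hb 1 0) (by omega)) hb0
    rwa [cMul_monoC10] at this
  have stepY : ∀ (b : ℕ → ℕ → ℝ) (e' : ℕ), DegLE b e' → e' + 1 ≤ d →
      polyCol d β b = 0 → polyCol d β (shiftC 0 1 b) = 0 := by
    intro b e' hb he' hb0
    have := hrg b (monoC 0 1) (degLE_mono hb (by omega))
      (fun k l hkl => by unfold monoC; rw [if_neg]; rintro ⟨rfl, rfl⟩; omega)
      (by rw [cMul_monoC01]; exact degLE_mono (degLE_shiftC hb 0 1) (by omega)) hb0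
    rwa [cMul_monoC01] at this
  have key : ∀ t A B, A + B = t → e + A + B ≤ d → polyCol d β (shiftC A B a) = 0 := by
    intro t
    induction t with
    | zero =>
      intro A B hAB _
      have : A = 0 ∧ B = 0 := by omega
      rw [this.1, this.2, shiftC_zero]
      exact h0
    | succ t ih =>
      intro A B hAB hle
      rcases Nat.eq_zero_or_pos A with hA | hA
      · subst hA
        have hB : B = t + 1 := by omega
        subst hB
        have e1 : shiftC 0 (t+1) a = shiftC 0 1 (shiftC 0 t a) := by
          rw [shiftC_shiftC, show (0:ℕ)+0 = 0 from rfl, show 1+t = t+1 by omega]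
        rw [e1]
        exact stepY _ (0 + t + e) (degLE_shiftC ha 0 t) (by omega) (ih 0 t (by omega) (by omega))
      · have e1 : shiftC A B a = shiftC 1 0 (shiftC (A-1) B a) := by
          rw [shiftC_shiftC, show 1+(A-1) = A by omega, Nat.zero_add]
        rw [e1]
        exact stepX _ ((A-1) + B + e) (degLE_shiftC ha (A-1) B) (by omega)
          (ih (A-1) B (by omega) (by omega))
  intro A B h
  exact key (A+B) A B rfl h

end Main
end St1

namespace St1
open Finset

section Main

variable (d n m : ℕ) (β p q : ℕ → ℕ → ℝ)

/-- Abbreviation for the hypotheses coming from `GeneratedBy`. -/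
structure Hyp : Prop where
  hd : 1 ≤ d
  hn1 : 1 ≤ n
  hnd : n ≤ d
  hm1 : 1 ≤ m
  hmd : m ≤ d
  hp : DegLE p (n-1)
  hq : DegLE q m
  hq0 : q 0 m = 0
  hrg : RecursivelyGenerated d β
  hspan : ∀ v : Idx d → ℝ,
    momentMatrix d β *ᵥ v = 0 ↔
      v ∈ Submodule.span ℝ
        {w : Idx d → ℝ |
          (∃ i j : ℕ, n + i + j ≤ d ∧ w = coeffVec d (shiftC i j (monoC n 0 - p))) ∨
          (∃ k l : ℕ, m + k + l ≤ d ∧ w = coeffVec d (shiftC k l (monoC 0 m - q)))}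

variable {d n m β p q}

namespace Hyp

variable (H : Hyp d n m β p q)
include H

lemma hker1 : ∀ A B, n + A + B ≤ d → polyCol d β (shiftC A B (monoC n 0 - p)) = 0 :=
  fun A B h => (H.hspan _).mpr (Submodule.subset_span (Or.inl ⟨A, B, h, rfl⟩))

lemma hker2 : ∀ A B, m + A + B ≤ d → polyCol d β (shiftC A B (monoC 0 m - q)) = 0 :=
  fun A B h => (H.hspan _).mpr (Submodule.subset_span (Or.inr ⟨A, B, h, rfl⟩))

lemma phi' (K L : ℕ) (h : K + L + n ≤ 2*d+1) :
    PP d n m β p q K L (monoC n 0 - p) = 0 :=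
  phi d n m β p q H.hn1 H.hnd H.hp H.hker1 K L h

lemma psi' (K L : ℕ) (h : K + L + m ≤ 2*d+1) :
    PP d n m β p q K L (monoC 0 m - q) = 0 :=
  psi d n m β p q H.hn1 H.hnd H.hm1 H.hmd H.hp H.hq H.hq0 H.hker1 H.hker2 K L h

lemma spanPP' (v : Idx d → ℝ) (hv : momentMatrix d β *ᵥ v = 0)
    (K L : ℕ) (hKL : K + L ≤ d + 1) :
    PP d n m β p q K L (extF d v) = 0 :=
  spanPP d n m β p q H.hn1 H.hnd H.hm1 H.hmd H.hp H.hq H.hq0 H.hker1 H.hker2 H.hspan v hv K L hKL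

lemma KE1 (a : ℕ → ℕ → ℝ) (ha : DegLE a d) (h0 : polyCol d β a = 0)
    (K L : ℕ) (h : K + L ≤ d + 1) :
    PP d n m β p q K L a = 0 := by
  have he : a = extF d (coeffVec d a) := by
    funext x y
    unfold extF coeffVec
    split_ifs with hxy
    · rfl
    · exact ha x y (by omega)
  have := H.spanPP' (coeffVec d a) h0 K L h
  rw [← he] at this
  exact this

lemma KE (a : ℕ → ℕ → ℝ) (e : ℕ) (he : e ≤ d) (ha : DegLE a e)
    (h0 : polyCol d β a = 0) (K L : ℕ) (h : K + L + e ≤ 2*d+1) :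
    PP d n m β p q K L a = 0 := by
  by_cases hKL : K + L ≤ d + 1
  · exact H.KE1 a (degLE_mono ha he) h0 K L hKL
  · obtain ⟨K2, L2, h1, h2, h3, h4⟩ :
        ∃ K2 L2, K2 ≤ K ∧ L2 ≤ L ∧ K2 + L2 + e ≤ d ∧ (K - K2) + (L - L2) = d + 1 :=
      ⟨min K (K+L-(d+1)), K+L-(d+1) - min K (K+L-(d+1)), by omega, by omega, by omega, by omega⟩
    have hg : polyCol d β (shiftC K2 L2 a) = 0 :=
      kerShift d β H.hd H.hrg a e ha h0 K2 L2 (by omega)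
    have hKE := H.KE1 (shiftC K2 L2 a)
      (degLE_mono (degLE_shiftC ha K2 L2) (by omega)) hg (K-K2) (L-L2) (by omega)
    rw [PP_shift d n m β p q (D := e) (K-K2) (L-L2) K2 L2 a ha (by omega)] at hKE
    have e2 : K - K2 + K2 = K := by omega
    have e3 : L - L2 + L2 = L := by omega
    rw [e2, e3] at hKE
    exact hKE

end Hyp

/-- The canonical new block. -/
def Bmat : Matrix (Idx d) (Jdx (d+1)) ℝ :=
  Matrix.of fun r c => mu d n m β p q (r.1.1 + c.1.1) (r.1.2 + c.1.2)

variable (d n m β p q)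

lemma augB (k l u v : ℕ) (hr : k + l ≤ d) (hc : u + v ≤ d+1) :
    augEntry d β (Bmat (d := d) (n := n) (m := m) (β := β) (p := p) (q := q)) k l u v
      = mu d n m β p q (k+u) (l+v) := by
  unfold augEntry
  rw [dif_pos hr]
  by_cases h1 : u + v ≤ d
  · rw [if_pos h1, mu_low d n m β p q (by omega)]
  · rw [if_neg h1, dif_pos (show u+v = d+1 by omega)]
    rfl

lemma augSum (w : ℕ → ℕ → ℝ) (hw : DegLE w (d+1)) (k l : ℕ) (hr : k + l ≤ d) :
    ∑ c : Idx (d+1), w c.1.1 c.1.2 * augEntry d β (Bmat (d := d) (n := n) (m := m) (β := β) (p := p) (q := q)) k l c.1.1 c.1.2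
      = PP d n m β p q k l w := by
  rw [idxSum (d+1) (fun u v => w u v * augEntry d β (Bmat (d := d) (n := n) (m := m) (β := β) (p := p) (q := q)) k l u v)]
  unfold PP SS
  refine Finset.sum_congr rfl fun u _ => Finset.sum_congr rfl fun v _ => ?_
  by_cases h1 : u + v ≤ d+1
  · rw [if_pos h1, augB d n m β p q k l u v hr h1]
  · rw [if_neg h1, hw u v (by omega), zero_mul]

variable {d n m β p q}

lemma Hyp.exC1 (H : Hyp d n m β p q) (A B : ℕ) (hAB : n + A + B ≤ d+1) :
    AugRel d β (Bmat (d := d) (n := n) (m := m) (β := β) (p := p) (q := q))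
      (shiftC A B (monoC n 0 - p)) := by
  intro k l hr
  rw [augSum d n m β p q _ (degLE_mono (degLE_shiftC (degLE_r1 H.hp) A B) (by omega)) k l hr,
    PP_shift d n m β p q (D := n) k l A B _ (degLE_r1 H.hp) (by omega)]
  exact H.phi' (k+A) (l+B) (by omega)

lemma Hyp.exC2 (H : Hyp d n m β p q) (A B : ℕ) (hAB : m + A + B ≤ d+1) :
    AugRel d β (Bmat (d := d) (n := n) (m := m) (β := β) (p := p) (q := q))
      (shiftC A B (monoC 0 m - q)) := by
  intro k l hr
  rw [augSum d n m β p q _ (degLE_mono (degLE_shiftC (degLE_r2 H.hq) A B) (by omega)) k l hr,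
    PP_shift d n m β p q (D := m) k l A B _ (degLE_r2 H.hq) (by omega)]
  exact H.psi' (k+A) (l+B) (by omega)

lemma Hyp.grandKernel (H : Hyp d n m β p q) (a : ℕ → ℕ → ℝ) (e : ℕ)
    (ha : DegLE a e) (he : e ≤ d+1)
    (hPP : ∀ k l, k + l ≤ d → PP d n m β p q k l a = 0)
    (K L : ℕ) (h : K + L + e ≤ 2*d+1) :
    PP d n m β p q K L a = 0 := by
  by_cases hKL : K + L ≤ d
  · exact hPP K L hKL
  · have hed : e ≤ d := by omega
    have h0 : polyCol d β a = 0 := by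
      funext r
      obtain ⟨⟨k,l⟩, hrkl⟩ := r
      simp only [Pi.zero_apply]
      rw [polyColS d β a (degLE_mono ha hed) k l hrkl]
      have hthis := hPP k l hrkl
      unfold PP at hthis
      rw [SS_congrW (d+2) 0 (fun u v => β (k+u) (l+v))
        (fun u v => mu d n m β p q (k+u) (l+v)) a (fun u v hne => ?_)]
      · exact hthis
      · have huv : u + v ≤ e := by
          by_contra hco; exact hne (ha u v (by omega))
        exact (mu_low d n m β p q (by omega)).symm
    exact H.KE a e hed ha h0 K L h

end Main
end St1

namespace St1
open Finset

section Main

variable {d n m : ℕ} {β p q : ℕ → ℕ → ℝ}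

/-- Extract the degree and the leading (max-`x`) top monomial of a nonzero polynomial. -/
lemma exists_deg (D : ℕ) (a : ℕ → ℕ → ℝ) (ha : DegLE a D) (hne : ¬ ∀ u v, a u v = 0) :
    ∃ e ia ja, e ≤ D ∧ DegLE a e ∧ ia + ja = e ∧ a ia ja ≠ 0 ∧
      (∀ u v, a u v ≠ 0 → u + v = e → u ≤ ia) := by
  classical
  set Fa : Finset (ℕ × ℕ) :=
    (range (D+1) ×ˢ range (D+1)).filter (fun ij => a ij.1 ij.2 ≠ 0) with hFa
  have hmem : ∀ u v, a u v ≠ 0 → (u, v) ∈ Fa := by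
    intro u v h
    rw [hFa, Finset.mem_filter, Finset.mem_product, Finset.mem_range, Finset.mem_range]
    have hu : u + v ≤ D := by
      by_contra hc; exact h (ha u v (by omega))
    exact ⟨⟨by omega, by omega⟩, h⟩
  have hne' : Fa.Nonempty := by
    push_neg at hne
    obtain ⟨u, v, h⟩ := hne
    exact ⟨(u,v), hmem u v h⟩
  have hae : DegLE a (Fa.sup (fun ij => ij.1 + ij.2)) := by
    intro k l hk
    by_contra hc
    have hle : k + l ≤ Fa.sup (fun ij => ij.1 + ij.2) := by
      simpa using Finset.le_sup (f := fun ij : ℕ × ℕ => ij.1 + ij.2) (hmem k l hc)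
    omega
  set e := Fa.sup (fun ij => ij.1 + ij.2) with he
  have heD : e ≤ D := by
    refine Finset.sup_le fun ij hij => ?_
    rw [hFa, Finset.mem_filter] at hij
    by_contra hc
    exact hij.2 (ha ij.1 ij.2 (by omega))
  set Fe : Finset (ℕ × ℕ) := Fa.filter (fun ij => ij.1 + ij.2 = e) with hFe
  have hFene : Fe.Nonempty := by
    obtain ⟨x, hx, hxe⟩ := Finset.exists_mem_eq_sup Fa hne' (fun ij => ij.1 + ij.2)
    exact ⟨x, by rw [hFe, Finset.mem_filter]; exact ⟨hx, hxe.symm⟩⟩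
  obtain ⟨x, hx, hxia⟩ := Finset.exists_mem_eq_sup Fe hFene (fun ij => ij.1)
  have hx' := hx
  rw [hFe, Finset.mem_filter, hFa, Finset.mem_filter] at hx'
  refine ⟨e, x.1, x.2, heD, hae, hx'.2, hx'.1.2, ?_⟩
  · intro u v h hu
    have hmem2 : (u, v) ∈ Fe := by
      rw [hFe, Finset.mem_filter]
      exact ⟨hmem u v h, hu⟩
    have hle : u ≤ Fe.sup (fun ij => ij.1) :=  by
      simpa using Finset.le_sup (f := fun ij : ℕ × ℕ => ij.1) hmem2
    omega

/-- Leading coefficient of a product. -/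
lemma prodLead (a b : ℕ → ℕ → ℝ) (ea eb ia ja ib jb : ℕ)
    (haE : DegLE a ea) (hbE : DegLE b eb)
    (hiae : ia + ja = ea) (hibe : ib + jb = eb)
    (ha0 : a ia ja ≠ 0) (hb0 : b ib jb ≠ 0)
    (hamax : ∀ u v, a u v ≠ 0 → u + v = ea → u ≤ ia)
    (hbmax : ∀ u v, b u v ≠ 0 → u + v = eb → u ≤ ib) :
    cMul a b (ia+ib) (ja+jb) = a ia ja * b ib jb := by
  unfold cMul
  rw [Finset.sum_eq_single_of_mem ia (Finset.mem_range.mpr (by omega))]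
  · rw [Finset.sum_eq_single_of_mem ja (Finset.mem_range.mpr (by omega))]
    · congr 2 <;> omega
    · intro j hj hja
      rw [Finset.mem_range] at hj
      by_contra hne
      have h1 : a ia j ≠ 0 := fun h => hne (by rw [h, zero_mul])
      have h2 : b (ia+ib-ia) (ja+jb-j) ≠ 0 := fun h => hne (by rw [h, mul_zero])
      have e1 : ia + j ≤ ea := by
        by_contra hc; exact h1 (haE ia j (by omega))
      have e2 : (ia+ib-ia) + (ja+jb-j) ≤ eb := by
        by_contra hc; exact h2 (hbE _ _ (by omega))
      have e3 : ia + ib - ia = ib := by omega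
      rw [e3] at h2 e2
      have e4 : ja + jb - j ≤ jb := by omega
      have e5 : ib + (ja+jb-j) = eb := by omega
      have := hbmax ib (ja+jb-j) h2 e5
      omega
  · intro i hi hia'
    rw [Finset.mem_range] at hi
    refine Finset.sum_eq_zero fun j hj => ?_
    rw [Finset.mem_range] at hj
    by_contra hne
    have h1 : a i j ≠ 0 := fun h => hne (by rw [h, zero_mul])
    have h2 : b (ia+ib-i) (ja+jb-j) ≠ 0 := fun h => hne (by rw [h, mul_zero])
    have e1 : i + j ≤ ea := by
      by_contra hc; exact h1 (haE i j (by omega))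
    have e2 : (ia+ib-i) + (ja+jb-j) ≤ eb := by
      by_contra hc; exact h2 (hbE _ _ (by omega))
    have e6 : i + j = ea := by omega
    have e7 : (ia+ib-i) + (ja+jb-j) = eb := by omega
    have m1 := hamax i j h1 e6
    have m2 := hbmax (ia+ib-i) (ja+jb-j) h2 e7
    omega

/-- Splitting a product as a combination of shifts. -/
lemma cmSplit (ea eb : ℕ) (a b : ℕ → ℕ → ℝ) (ha : DegLE a ea) (hb : DegLE b eb)
    (heab : ea + eb ≤ d+1) (k l : ℕ) :
    cMul a b k l = ∑ u ∈ range (d+2), ∑ v ∈ range (d+2), b u v * shiftC u v a k l := by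
  have hzero : ∀ u v, b u v * shiftC u v a k l ≠ 0 → (u ≤ k ∧ v ≤ l ∧ u+v ≤ eb ∧ k+l ≤ ea + u + v) := by
    intro u v hne
    have h1 : b u v ≠ 0 := fun h => hne (by rw [h, zero_mul])
    have h2 : shiftC u v a k l ≠ 0 := fun h => hne (by rw [h, mul_zero])
    have h3 : u ≤ k ∧ v ≤ l := by
      by_contra hc
      exact h2 (by unfold shiftC; rw [if_neg hc])
    have h4 : a (k-u) (l-v) ≠ 0 := by
      unfold shiftC at h2; rwa [if_pos h3] at h2
    have h5 : (k-u) + (l-v) ≤ ea := by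
      by_contra hc; exact h4 (ha _ _ (by omega))
    have h6 : u + v ≤ eb := by
      by_contra hc; exact h1 (hb _ _ (by omega))
    exact ⟨h3.1, h3.2, h6, by omega⟩
  by_cases hkl : k ≤ d+1 ∧ l ≤ d+1
  · -- main case
    have e1 : ∀ u v, b u v * shiftC u v a k l
        = if u ≤ k then (if v ≤ l then b u v * a (k-u) (l-v) else 0) else 0 := by
      intro u v
      unfold shiftC
      by_cases h1 : u ≤ k <;> by_cases h2 : v ≤ l
      · rw [if_pos ⟨h1, h2⟩, if_pos h1, if_pos h2]
      · rw [if_neg (by omega), if_pos h1, if_neg h2, mul_zero]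
      · rw [if_neg (by omega), if_neg h1, mul_zero]
      · rw [if_neg (by omega), if_neg h1, mul_zero]
    simp only [e1]
    have e2 : ∀ u, ∑ v ∈ range (d+2), (if u ≤ k then (if v ≤ l then b u v * a (k-u) (l-v) else 0) else 0)
        = if u ≤ k then (∑ v ∈ range (d+2), if v ≤ l then b u v * a (k-u) (l-v) else 0) else 0 := by
      intro u; exact sum_if_const (d+2) _
    simp only [e2]
    have e3 : ∀ u, (if u ≤ k then (∑ v ∈ range (d+2), if v ≤ l then b u v * a (k-u) (l-v) else 0) else 0)
        = if u ≤ k then (∑ v ∈ range (l+1), b u v * a (k-u) (l-v)) else 0 := by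
      intro u
      split_ifs with h
      · have ea : ∑ v ∈ range (l+1), b u v * a (k-u) (l-v)
            = ∑ v ∈ range (l+1), (if v ≤ l then b u v * a (k-u) (l-v) else 0) :=
          Finset.sum_congr rfl fun v hv => by
            rw [Finset.mem_range] at hv; rw [if_pos (by omega)]
        rw [ea]
        refine (Finset.sum_subset (fun x hx => ?_) (fun x hx hx' => ?_)).symm
        · rw [Finset.mem_range] at hx ⊢; omega
        · rw [Finset.mem_range] at hx hx'
          rw [if_neg (by omega)]
      · rfl
    simp only [e3]
    have e4 : ∑ u ∈ range (d+2), (if u ≤ k then (∑ v ∈ range (l+1), b u v * a (k-u) (l-v)) else 0)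
        = ∑ u ∈ range (k+1), ∑ v ∈ range (l+1), b u v * a (k-u) (l-v) := by
      have ea : ∑ u ∈ range (k+1), ∑ v ∈ range (l+1), b u v * a (k-u) (l-v)
          = ∑ u ∈ range (k+1), (if u ≤ k then (∑ v ∈ range (l+1), b u v * a (k-u) (l-v)) else 0) :=
        Finset.sum_congr rfl fun u hu => by
          rw [Finset.mem_range] at hu; rw [if_pos (by omega)]
      rw [ea]
      refine (Finset.sum_subset (fun x hx => ?_) (fun x hx hx' => ?_)).symm
      · rw [Finset.mem_range] at hx ⊢; omega
      · rw [Finset.mem_range] at hx hx'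
        rw [if_neg (by omega)]
    rw [e4]
    -- now reflect
    rw [← Finset.sum_range_reflect]
    refine Finset.sum_congr rfl fun i hi => ?_
    rw [Finset.mem_range] at hi
    rw [← Finset.sum_range_reflect]
    refine Finset.sum_congr rfl fun j hj => ?_
    rw [Finset.mem_range] at hj
    have e5 : k + 1 - 1 - i = k - i := by omega
    have e6 : l + 1 - 1 - j = l - j := by omega
    rw [e5, e6]
    have e7 : k - (k - i) = i := by omega
    have e8 : l - (l - j) = j := by omega
    rw [e7, e8]
    ring
  · -- degenerate case : k + l is too big, both sides vanish
    have hklb : d + 2 ≤ k + l := by omega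
    have lhs0 : cMul a b k l = 0 := by
      refine Finset.sum_eq_zero fun i hi => Finset.sum_eq_zero fun j hj => ?_
      rw [Finset.mem_range] at hi hj
      by_contra hne
      have h1 : a i j ≠ 0 := fun h => hne (by rw [h, zero_mul])
      have h2 : b (k-i) (l-j) ≠ 0 := fun h => hne (by rw [h, mul_zero])
      have e1 : i + j ≤ ea := by
        by_contra hc; exact h1 (ha _ _ (by omega))
      have e2 : (k-i) + (l-j) ≤ eb := by
        by_contra hc; exact h2 (hb _ _ (by omega))
      omega
    rw [lhs0]
    refine (Finset.sum_eq_zero fun u hu => Finset.sum_eq_zero fun v hv => ?_).symm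
    rw [Finset.mem_range] at hu hv
    by_contra hne
    have := hzero u v hne
    omega

lemma PP_sumComb (K L : ℕ) (c : ℕ → ℕ → ℝ) (W : ℕ → ℕ → ℕ → ℕ → ℝ) :
    PP d n m β p q K L (fun x y => ∑ u ∈ range (d+2), ∑ v ∈ range (d+2), c u v * W u v x y)
      = ∑ u ∈ range (d+2), ∑ v ∈ range (d+2), c u v * PP d n m β p q K L (W u v) := by
  unfold PP SS
  have e1 : ∀ x y, (∑ u ∈ range (d+2), ∑ v ∈ range (d+2), c u v * W u v x y)
        * mu d n m β p q (K+x) (L+y)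
      = ∑ u ∈ range (d+2), ∑ v ∈ range (d+2),
          (c u v * W u v x y * mu d n m β p q (K+x) (L+y)) := by
    intro x y
    rw [Finset.sum_mul]
    exact Finset.sum_congr rfl fun u _ => by rw [Finset.sum_mul]
  simp only [e1]
  rw [swap4]
  refine Finset.sum_congr rfl fun u _ => Finset.sum_congr rfl fun v _ => ?_
  rw [Finset.mul_sum]
  refine Finset.sum_congr rfl fun x _ => ?_
  rw [Finset.mul_sum]
  exact Finset.sum_congr rfl fun y _ => by ring

/-- The augmented matrix `(M_d B)` for `B = Bmat` is recursively generated. -/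
lemma Hyp.augRecGen (H : Hyp d n m β p q) :
    AugRecGen d β (Bmat (d := d) (n := n) (m := m) (β := β) (p := p) (q := q)) := by
  intro a b hA hB hAB hRel
  intro k l hr
  rw [augSum d n m β p q _ hAB k l hr]
  by_cases haz : ∀ u v, a u v = 0
  · refine PP_zero' d n m β p q k l _ fun x y => ?_
    refine Finset.sum_eq_zero fun i _ => Finset.sum_eq_zero fun j _ => ?_
    rw [haz i j, zero_mul]
  by_cases hbz : ∀ u v, b u v = 0
  · refine PP_zero' d n m β p q k l _ fun x y => ?_
    refine Finset.sum_eq_zero fun i _ => Finset.sum_eq_zero fun j _ => ?_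
    rw [hbz (x-i) (y-j), mul_zero]
  obtain ⟨ea, ia, ja, heaD, haE, hiae, ha0, hamax⟩ := exists_deg (d+1) a hA haz
  obtain ⟨eb, ib, jb, hebD, hbE, hibe, hb0, hbmax⟩ := exists_deg (d+1) b hB hbz
  have heab : ea + eb ≤ d + 1 := by
    by_contra hc
    have := prodLead a b ea eb ia ja ib jb haE hbE hiae hibe ha0 hb0 hamax hbmax
    exact (mul_ne_zero ha0 hb0) (this ▸ hAB (ia+ib) (ja+jb) (by omega))
  have hsplit : cMul a b = fun x y =>
      ∑ u ∈ range (d+2), ∑ v ∈ range (d+2), b u v * shiftC u v a x y := by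
    funext x y
    exact cmSplit ea eb a b haE hbE heab x y
  rw [hsplit, PP_sumComb]
  refine Finset.sum_eq_zero fun u hu => Finset.sum_eq_zero fun v hv => ?_
  by_cases hbv : b u v = 0
  · rw [hbv, zero_mul]
  have huv : u + v ≤ eb := by
    by_contra hc; exact hbv (hbE u v (by omega))
  rw [PP_shift d n m β p q (D := ea) k l u v a haE (by omega)]
  have hPPa : ∀ k' l', k' + l' ≤ d → PP d n m β p q k' l' a = 0 := by
    intro k' l' hr'
    rw [← augSum d n m β p q a hA k' l' hr']
    exact hRel k' l' hr'
  rw [H.grandKernel a ea haE (by omega) hPPa (k+u) (l+v) (by omega), mul_zero]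

end Main
end St1

namespace St1
open Finset Matrix

/-- For a symmetric real matrix, a vector orthogonal to the kernel lies in the range. -/
lemma ortho {ι : Type*} [Fintype ι] [DecidableEq ι] (M : Matrix ι ι ℝ)
    (hsym : Mᵀ = M) (v : ι → ℝ) (h : ∀ w, M *ᵥ w = 0 → v ⬝ᵥ w = 0) :
    ∃ u, v = M *ᵥ u := by
  by_contra hc
  push_neg at hc
  have hv : v ∉ LinearMap.range (M.mulVecLin) := by
    rintro ⟨u, hu⟩
    rw [Matrix.mulVecLin_apply] at hu
    exact hc u hu.symm
  obtain ⟨φ, hφv, hφ0⟩ := Submodule.exists_dual_map_eq_bot_of_notMem hv inferInstance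
  set w : ι → ℝ := fun i => φ (fun j => if i = j then 1 else 0) with hw
  have hrep : ∀ x : ι → ℝ, φ x = w ⬝ᵥ x := by
    intro x
    conv_lhs => rw [pi_eq_sum_univ x]
    rw [map_sum]
    unfold dotProduct
    refine Finset.sum_congr rfl fun i _ => ?_
    rw [LinearMap.map_smul, smul_eq_mul]
    simp only [hw]
    ring
  have hφrange : ∀ u, φ (M *ᵥ u) = 0 := by
    intro u
    have hmem : φ (M *ᵥ u) ∈ Submodule.map φ (LinearMap.range M.mulVecLin) :=
      Submodule.mem_map_of_mem ⟨u, Matrix.mulVecLin_apply _ _⟩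
    rw [hφ0] at hmem
    exact (Submodule.mem_bot ℝ).mp hmem
  have hMw : M *ᵥ w = 0 := by
    have hdp : ∀ u : ι → ℝ, (M *ᵥ w) ⬝ᵥ u = 0 := by
      intro u
      have h1 : w ⬝ᵥ (M *ᵥ u) = 0 := by rw [← hrep]; exact hφrange u
      rwa [Matrix.dotProduct_mulVec, ← Matrix.mulVec_transpose, hsym] at h1
    have h2 := hdp (M *ᵥ w)
    rwa [dotProduct_self_eq_zero] at h2
  have h3 := h w hMw
  rw [dotProduct_comm] at h3
  exact hφv ((hrep v).trans h3)


section Main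

variable {d n m : ℕ} {β p q : ℕ → ℕ → ℝ}

lemma momentMatrix_symm : (momentMatrix d β)ᵀ = momentMatrix d β := by
  ext r c
  unfold momentMatrix
  simp only [Matrix.transpose_apply, Matrix.of_apply]
  rw [Nat.add_comm r.1.1 c.1.1, Nat.add_comm r.1.2 c.1.2]

/-- Condition (d): every column of `Bmat` lies in the column space of `M_d`. -/
lemma Hyp.colSpace (H : Hyp d n m β p q) (c : Jdx (d+1)) :
    ∃ v : Idx d → ℝ,
      (fun r : Idx d => (Bmat (d := d) (n := n) (m := m) (β := β) (p := p) (q := q)) r c)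
        = momentMatrix d β *ᵥ v := by
  obtain ⟨⟨i, j⟩, hc⟩ := c
  refine ortho (momentMatrix d β) momentMatrix_symm _ (fun w hw => ?_)
  have e1 : (fun r : Idx d => (Bmat (d := d) (n := n) (m := m) (β := β) (p := p) (q := q)) r ⟨(i,j), hc⟩) ⬝ᵥ w
      = ∑ r : Idx d, (fun u v => extF d w u v * mu d n m β p q (i+u) (j+v)) r.1.1 r.1.2 := by
    unfold dotProduct
    refine Finset.sum_congr rfl fun r _ => ?_
    obtain ⟨⟨k, l⟩, hr⟩ := r
    show (Bmat (d := d) (n := n) (m := m) (β := β) (p := p) (q := q)) ⟨(k,l),hr⟩ ⟨(i,j),hc⟩ * w ⟨(k,l),hr⟩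
      = extF d w k l * mu d n m β p q (i+k) (j+l)
    unfold Bmat extF
    rw [dif_pos hr]
    simp only [Matrix.of_apply]
    rw [Nat.add_comm k i, Nat.add_comm l j]
    ring
  rw [e1, idxSum d (fun u v => extF d w u v * mu d n m β p q (i+u) (j+v))]
  have e2 : ∀ u v, (if u + v ≤ d then extF d w u v * mu d n m β p q (i+u) (j+v) else 0)
      = extF d w u v * mu d n m β p q (i+u) (j+v) := by
    intro u v
    split_ifs with h
    · rfl
    · rw [show extF d w u v = 0 from extF_degLE d w u v (by omega), zero_mul]
  simp only [e2]
  have e3 : ∑ u ∈ range (d+1), ∑ v ∈ range (d+1), extF d w u v * mu d n m β p q (i+u) (j+v)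
      = PP d n m β p q i j (extF d w) := by
    unfold PP SS
    exact extendBox (d+1) (d+2) (by omega) _ (fun u v huv => by
      rw [show extF d w u v = 0 from extF_degLE d w u v (by omega), zero_mul])
  rw [e3]
  exact H.spanPP' w hw i j (by omega)

end Main
end St1

namespace St1
open Finset Matrix

section Main

variable {d n m : ℕ} {β p q : ℕ → ℕ → ℝ}

lemma augSumGen (B₂ : Matrix (Idx d) (Jdx (d+1)) ℝ) (w : ℕ → ℕ → ℝ)
    (hw : DegLE w (d+1)) (k l : ℕ) :
    ∑ c : Idx (d+1), w c.1.1 c.1.2 * augEntry d β B₂ k l c.1.1 c.1.2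
      = SS (d+2) (fun u v => augEntry d β B₂ k l u v) w := by
  rw [idxSum (d+1) (fun u v => w u v * augEntry d β B₂ k l u v)]
  unfold SS
  refine Finset.sum_congr rfl fun u _ => Finset.sum_congr rfl fun v _ => ?_
  by_cases h1 : u + v ≤ d+1
  · rw [if_pos h1]
  · rw [if_neg h1, hw u v (by omega), zero_mul]

lemma dec1 (hn1 : 1 ≤ n) (hnd : n ≤ d) (hp : DegLE p (n-1))
    (B₂ : Matrix (Idx d) (Jdx (d+1)) ℝ) (A b' : ℕ) (h : n + A + b' = d+1)
    (hAug : AugRel d β B₂ (shiftC A b' (monoC n 0 - p))) (k l : ℕ) (hr : k + l ≤ d) :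
    augEntry d β B₂ k l (A+n) (b'+0)
      = SS (d+2) (fun u v => augEntry d β B₂ k l (A+u) (b'+v)) p := by
  have h0 := hAug k l hr
  rw [augSumGen B₂ _ (degLE_mono (degLE_shiftC (degLE_r1 hp) A b') (by omega)) k l] at h0
  rw [shiftC_sub, SS_sub, shiftC_monoC,
    SS_monoC (d+2) (A+n) (b'+0) _ (by omega) (by omega),
    shiftSS (d+2) A b' (n-1) (fun u v => augEntry d β B₂ k l u v) p hp (by omega)] at h0
  beta_reduce at h0
  linarith

lemma dec2 (hm1 : 1 ≤ m) (hmd : m ≤ d) (hq : DegLE q m)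
    (B₂ : Matrix (Idx d) (Jdx (d+1)) ℝ) (A b' : ℕ) (h : m + A + b' = d+1)
    (hAug : AugRel d β B₂ (shiftC A b' (monoC 0 m - q))) (k l : ℕ) (hr : k + l ≤ d) :
    augEntry d β B₂ k l (A+0) (b'+m)
      = SS (d+2) (fun u v => augEntry d β B₂ k l (A+u) (b'+v)) q := by
  have h0 := hAug k l hr
  rw [augSumGen B₂ _ (degLE_mono (degLE_shiftC (degLE_r2 hq) A b') (by omega)) k l] at h0
  rw [shiftC_sub, SS_sub, shiftC_monoC,
    SS_monoC (d+2) (A+0) (b'+m) _ (by omega) (by omega),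
    shiftSS (d+2) A b' m (fun u v => augEntry d β B₂ k l u v) q hq (by omega)] at h0
  beta_reduce at h0
  linarith

lemma augEntry_eq_entry (B₂ : Matrix (Idx d) (Jdx (d+1)) ℝ) (k l u v : ℕ)
    (hr : k + l ≤ d) (hc : u + v = d+1) :
    augEntry d β B₂ k l u v = B₂ ⟨(k,l), hr⟩ ⟨(u,v), hc⟩ := by
  unfold augEntry
  rw [dif_pos hr, if_neg (by omega), dif_pos hc]

lemma augEntry_low (B₂ : Matrix (Idx d) (Jdx (d+1)) ℝ) (k l u v : ℕ)
    (hr : k + l ≤ d) (hc : u + v ≤ d) :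
    augEntry d β B₂ k l u v = β (k+u) (l+v) := by
  unfold augEntry
  rw [dif_pos hr, if_pos hc]

/-- The Hankel property, phrased for `augEntry`. -/
def HankelProp (B₂ : Matrix (Idx d) (Jdx (d+1)) ℝ) : Prop :=
  ∀ (r r' : Idx d) (c c' : Jdx (d + 1)),
    r.1.1 + r.1.2 = d → r'.1.1 + r'.1.2 = d →
    r.1.1 + c.1.1 = r'.1.1 + c'.1.1 → r.1.2 + c.1.2 = r'.1.2 + c'.1.2 →
    B₂ r c = B₂ r' c'

lemma hankelAug (B₂ : Matrix (Idx d) (Jdx (d+1)) ℝ) (hb : HankelProp B₂)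
    (k l u v k₀ l₀ i₀ j₀ : ℕ) (hkl : k + l = d) (hc : u + v = d+1)
    (hk₀ : k₀ + l₀ = d) (hc₀ : i₀ + j₀ = d+1)
    (h1 : k + u = k₀ + i₀) (h2 : l + v = l₀ + j₀) :
    augEntry d β B₂ k l u v = augEntry d β B₂ k₀ l₀ i₀ j₀ := by
  rw [augEntry_eq_entry B₂ k l u v (by omega) hc,
    augEntry_eq_entry B₂ k₀ l₀ i₀ j₀ (by omega) hc₀]
  exact hb ⟨(k,l), by omega⟩ ⟨(k₀,l₀), by omega⟩ ⟨(u,v), hc⟩ ⟨(i₀,j₀), hc₀⟩ hkl hk₀ h1 h2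

lemma hankelBmat : HankelProp (Bmat (d := d) (n := n) (m := m) (β := β) (p := p) (q := q)) := by
  intro r r' c c' h1 h2 h3 h4
  unfold Bmat
  simp only [Matrix.of_apply]
  rw [h3, h4]

/-- the "high" case `n ≤ s` of the uniqueness induction -/
lemma caseHigh (H : Hyp d n m β p q) (B' : Matrix (Idx d) (Jdx (d+1)) ℝ)
    (hb' : HankelProp B')
    (hc1' : ∀ a b : ℕ, n + a + b ≤ d + 1 → AugRel d β B' (shiftC a b (monoC n 0 - p)))
    (s k l u v : ℕ) (hkl : k + l = d) (hc : u + v = d+1) (hs : k + u = s) (hns : n ≤ s) :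
    augEntry d β B' k l u v
      = augEntry d β (Bmat (d := d) (n := n) (m := m) (β := β) (p := p) (q := q)) k l u v := by
  have hndd := H.hnd
  have hn1 := H.hn1
  obtain ⟨i₀, k₀, hni₀, hi₀, hk₀, hsum⟩ :
      ∃ i₀ k₀, n ≤ i₀ ∧ i₀ ≤ d+1 ∧ k₀ ≤ d ∧ k₀ + i₀ = s :=
    ⟨min s (d+1), s - min s (d+1), by omega, by omega, by omega, by omega⟩
  have step1 : augEntry d β B' k l u v = augEntry d β B' k₀ (d-k₀) i₀ (d+1-i₀) :=
    hankelAug B' hb' k l u v k₀ (d-k₀) i₀ (d+1-i₀) hkl hc (by omega) (by omega)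
      (by omega) (by omega)
  have step1' : augEntry d β (Bmat (d := d) (n := n) (m := m) (β := β) (p := p) (q := q)) k l u v
      = augEntry d β (Bmat (d := d) (n := n) (m := m) (β := β) (p := p) (q := q)) k₀ (d-k₀) i₀ (d+1-i₀) :=
    hankelAug _ hankelBmat k l u v k₀ (d-k₀) i₀ (d+1-i₀) hkl hc (by omega) (by omega)
      (by omega) (by omega)
  rw [step1, step1']
  have hd1 := dec1 hn1 hndd H.hp B' (i₀-n) (d+1-i₀) (by omega)
    (hc1' (i₀-n) (d+1-i₀) (by omega)) k₀ (d-k₀) (by omega)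
  have hd2 := dec1 hn1 hndd H.hp
    (Bmat (d := d) (n := n) (m := m) (β := β) (p := p) (q := q)) (i₀-n) (d+1-i₀) (by omega)
    (H.exC1 (i₀-n) (d+1-i₀) (by omega)) k₀ (d-k₀) (by omega)
  have eA : (i₀-n)+n = i₀ := by omega
  have eB : (d+1-i₀)+0 = d+1-i₀ := by omega
  rw [eA, eB] at hd1 hd2
  rw [hd1, hd2]
  refine SS_congrW (d+2) 0 _ _ p (fun u' v' hne => ?_)
  have huv' : u' + v' ≤ n - 1 := by
    by_contra hco; exact hne (H.hp u' v' (by omega))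
  rw [augEntry_low B' k₀ (d-k₀) _ _ (by omega) (by omega),
    augEntry_low _ k₀ (d-k₀) _ _ (by omega) (by omega)]

/-- The key uniqueness induction. -/
lemma keyE (H : Hyp d n m β p q) (B' : Matrix (Idx d) (Jdx (d+1)) ℝ)
    (hb' : HankelProp B')
    (hc1' : ∀ a b : ℕ, n + a + b ≤ d + 1 → AugRel d β B' (shiftC a b (monoC n 0 - p)))
    (hc2' : ∀ a b : ℕ, m + a + b ≤ d + 1 → AugRel d β B' (shiftC a b (monoC 0 m - q))) :
    ∀ t s k l u v, k + l = d → u + v = d+1 → k + u = s → n - s ≤ t →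
      augEntry d β B' k l u v
        = augEntry d β (Bmat (d := d) (n := n) (m := m) (β := β) (p := p) (q := q)) k l u v := by
  intro t
  induction t with
  | zero =>
    intro s k l u v hkl hc hs hts
    exact caseHigh H B' hb' hc1' s k l u v hkl hc hs (by omega)
  | succ t ih =>
    intro s k l u v hkl hc hs hts
    by_cases hsn : n ≤ s
    · exact caseHigh H B' hb' hc1' s k l u v hkl hc hs hsn
    · have hm1 := H.hm1
      have hmdd := H.hmd
      have hndd := H.hnd
      obtain ⟨A, k₀, hA1, hk₀, hsum⟩ :
          ∃ A k₀, A ≤ d+1-m ∧ k₀ ≤ d ∧ k₀ + A = s :=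
        ⟨min s (d+1-m), s - min s (d+1-m), by omega, by omega, by omega⟩
      have step1 : augEntry d β B' k l u v = augEntry d β B' k₀ (d-k₀) A (d+1-A) :=
        hankelAug B' hb' k l u v k₀ (d-k₀) A (d+1-A) hkl hc (by omega) (by omega)
          (by omega) (by omega)
      have step1' : augEntry d β (Bmat (d := d) (n := n) (m := m) (β := β) (p := p) (q := q)) k l u v
          = augEntry d β (Bmat (d := d) (n := n) (m := m) (β := β) (p := p) (q := q)) k₀ (d-k₀) A (d+1-A) :=
        hankelAug _ hankelBmat k l u v k₀ (d-k₀) A (d+1-A) hkl hc (by omega) (by omega)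
          (by omega) (by omega)
      rw [step1, step1']
      have hd1 := dec2 hm1 hmdd H.hq B' A (d+1-m-A) (by omega)
        (hc2' A (d+1-m-A) (by omega)) k₀ (d-k₀) (by omega)
      have hd2 := dec2 hm1 hmdd H.hq
        (Bmat (d := d) (n := n) (m := m) (β := β) (p := p) (q := q)) A (d+1-m-A) (by omega)
        (H.exC2 A (d+1-m-A) (by omega)) k₀ (d-k₀) (by omega)
      have eA : A + 0 = A := by omega
      have eB : (d+1-m-A) + m = d+1-A := by omega
      rw [eA, eB] at hd1 hd2
      rw [hd1, hd2]
      refine SS_congrW (d+2) 0 _ _ q (fun u' v' hne => ?_)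
      have huv' : u' + v' ≤ m := by
        by_contra hco; exact hne (H.hq u' v' (by omega))
      by_cases hlow : u' + v' ≤ m - 1
      · rw [augEntry_low B' k₀ (d-k₀) _ _ (by omega) (by omega),
          augEntry_low _ k₀ (d-k₀) _ _ (by omega) (by omega)]
      · have htop : u' + v' = m := by omega
        have hu1 : 1 ≤ u' := by
          by_contra hu0
          have : u' = 0 := by omega
          subst this
          have : v' = m := by omega
          subst this
          exact hne H.hq0
        exact ih (s + u') k₀ (d-k₀) (A+u') ((d+1-m-A)+v') (by omega) (by omega)
          (by omega) (by omega)

end Main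
end St1

/-- If `M_d(β)` is positive semidefinite, recursively generated, and its
column relations are generated entirely by `X^n = p` and `Y^m = q` via recursiveness and
linearity, then there is a unique block `B(d+1)` such that: (a) its rows of degree ≤ d-1
consist of the old moments; (b) its degree-d row block is Hankel; (c) the columns of
`(M_d  B(d+1))` satisfy all relations `(x^a y^b (x^n - p))(X,Y) = 0` and
`(x^a y^b (y^m - q))(X,Y) = 0` of degree ≤ d+1 and `(M_d  B(d+1))` is recursively
generated; and (d) the column space of `B(d+1)` is contained in that of `M_d`. -/
theorem statement1 (d n m : ℕ) (hd : 1 ≤ d) (β p q : ℕ → ℕ → ℝ)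
    (hpsd : (momentMatrix d β).PosSemidef)
    (hrg : RecursivelyGenerated d β)
    (hgen : GeneratedBy d n m β p q) :
    ∃! B : Matrix (Idx d) (Jdx (d + 1)) ℝ,
      (∀ (r : Idx d) (c : Jdx (d + 1)), r.1.1 + r.1.2 ≤ d - 1 →
        B r c = β (r.1.1 + c.1.1) (r.1.2 + c.1.2)) ∧
      (∀ (r r' : Idx d) (c c' : Jdx (d + 1)),
        r.1.1 + r.1.2 = d → r'.1.1 + r'.1.2 = d →
        r.1.1 + c.1.1 = r'.1.1 + c'.1.1 → r.1.2 + c.1.2 = r'.1.2 + c'.1.2 →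
        B r c = B r' c') ∧
      (∀ a b : ℕ, n + a + b ≤ d + 1 → AugRel d β B (shiftC a b (monoC n 0 - p))) ∧
      (∀ a b : ℕ, m + a + b ≤ d + 1 → AugRel d β B (shiftC a b (monoC 0 m - q))) ∧
      AugRecGen d β B ∧
      (∀ c : Jdx (d + 1), ∃ v : Idx d → ℝ,
        (fun r : Idx d => B r c) = momentMatrix d β *ᵥ v) := by
  obtain ⟨hn1, hnd, hm1, hmd, hp, hq, hq0, hrel1, hrel2, hspan⟩ := hgen
  have H : St1.Hyp d n m β p q := ⟨hd, hn1, hnd, hm1, hmd, hp, hq, hq0, hrg, hspan⟩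
  refine ⟨St1.Bmat (d := d) (n := n) (m := m) (β := β) (p := p) (q := q),
    ⟨?_, ?_, ?_, ?_, ?_, ?_⟩, ?_⟩
  · -- (a) old moments
    intro r c hrd
    have hr2 := r.2
    have hc2 := c.2
    show St1.mu d n m β p q (r.1.1 + c.1.1) (r.1.2 + c.1.2) = β (r.1.1 + c.1.1) (r.1.2 + c.1.2)
    exact St1.mu_low d n m β p q (by omega)
  · -- (b) Hankel
    exact St1.hankelBmat
  · -- (c1)
    intro a b hab
    exact H.exC1 a b hab
  · -- (c2)
    intro a b hab
    exact H.exC2 a b hab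
  · -- (c) recursively generated
    exact H.augRecGen
  · -- (d) column space
    intro c
    exact H.colSpace c
  · -- uniqueness
    rintro B' ⟨ha', hb', hc1', hc2', _hrec', _hcol'⟩
    ext r c
    obtain ⟨⟨k, l⟩, hr⟩ := r
    obtain ⟨⟨u, v⟩, hc⟩ := c
    by_cases hkl : k + l ≤ d - 1
    · rw [ha' ⟨(k,l), hr⟩ ⟨(u,v), hc⟩ hkl]
      show β (k+u) (l+v)
        = St1.mu d n m β p q (k + u) (l + v)
      exact (St1.mu_low d n m β p q (by omega)).symm
    · have hkld : k + l = d := by omega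
      have hmain := St1.keyE H B' hb' hc1' hc2' n (k+u) k l u v hkld hc rfl (by omega)
      rwa [St1.augEntry_eq_entry B' k l u v hr hc,
        St1.augEntry_eq_entry _ k l u v hr hc] at hmain
end
end
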